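/- arXiv:2005.03452 — 10 statements merged into one kernel-verified Lean document; each statement's English description precedes it below -/
import Mathlib

section
/- For every β > 0 and every real n×m matrix W, the ℓ2 operator norm of the matrix A_β = (1+β)·(I + β·W·Wᵀ)⁻¹·W satisfies ‖A_β‖₂ ≤ (β^{1/2} + β^{-1/2})/2. Consequently, for any b ∈ ℝ^n and c ∈ ℝ^m, the affine map x ↦ A_β x + (I + β·W·Wᵀ)⁻¹(b + β·W·c) from ℝ^m to ℝ^n is Lipschitz continuous with constant (β^{1/2} + β^{-1/2})/2 with respect to the Euclidean norms. -/
open Matrix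

lemma toE_mul {n k l : ℕ} (A : Matrix (Fin n) (Fin k) ℝ) (B : Matrix (Fin k) (Fin l) ℝ)
    (x : EuclideanSpace ℝ (Fin l)) :
    Matrix.toEuclideanLin (A * B) x = Matrix.toEuclideanLin A (Matrix.toEuclideanLin B x) := by
  simp [Matrix.toEuclideanLin_apply, Matrix.mulVec_mulVec]

lemma stmt1_posdef {n m : ℕ} (β : ℝ) (hβ : 0 < β) (W : Matrix (Fin n) (Fin m) ℝ) :
    ((1 : Matrix (Fin n) (Fin n) ℝ) + β • (W * Wᵀ)).PosDef := by
  have hWWt : (W * Wᵀ).PosSemidef := by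
    simpa [conjTranspose_eq_transpose_of_trivial] using posSemidef_self_mul_conjTranspose W
  refine posDef_iff_dotProduct_mulVec.mpr ⟨?_, fun x hx => ?_⟩
  · unfold Matrix.IsHermitian
    simp [conjTranspose_add, conjTranspose_smul, hWWt.isHermitian.eq]
  · have h2 := hWWt.dotProduct_mulVec_nonneg x
    have h1 : (0:ℝ) < star x ⬝ᵥ x := dotProduct_star_self_pos_iff.mpr hx
    simp only [add_mulVec, smul_mulVec, dotProduct_add, dotProduct_smul, one_mulVec,
      smul_eq_mul]
    nlinarith

lemma stmt1_key {n m : ℕ} (β : ℝ) (hβ : 0 < β) (W : Matrix (Fin n) (Fin m) ℝ)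
    (x : EuclideanSpace ℝ (Fin m)) :
    ‖Matrix.toEuclideanLin ((1 + β) • (((1 : Matrix (Fin n) (Fin n) ℝ) + β • (W * Wᵀ))⁻¹ * W)) x‖
      ≤ ((Real.sqrt β + 1 / Real.sqrt β) / 2) * ‖x‖ := by
  set N : Matrix (Fin n) (Fin n) ℝ := (1 : Matrix (Fin n) (Fin n) ℝ) + β • (W * Wᵀ) with hNdef
  have hN : N.PosDef := stmt1_posdef β hβ W
  have hdet : IsUnit N.det := (Matrix.isUnit_iff_isUnit_det N).mp hN.isUnit
  set y : EuclideanSpace ℝ (Fin n) := Matrix.toEuclideanLin (N⁻¹ * W) x with hy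
  set z : EuclideanSpace ℝ (Fin m) := Matrix.toEuclideanLin Wᵀ y with hz
  have hNy : Matrix.toEuclideanLin N y = Matrix.toEuclideanLin W x := by
    rw [hy, ← toE_mul, ← Matrix.mul_assoc, Matrix.mul_nonsing_inv _ hdet, Matrix.one_mul]
  -- adjoint fact
  have hadj : Matrix.toEuclideanLin W = LinearMap.adjoint (Matrix.toEuclideanLin Wᵀ) := by
    rw [← Matrix.toEuclideanLin_conjTranspose_eq_adjoint]
    simp [conjTranspose_eq_transpose_of_trivial]
  have hinner1 : inner ℝ y (Matrix.toEuclideanLin N y) = ‖y‖^2 + β * ‖z‖^2 := by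
    rw [hNdef]
    rw [map_add, _root_.map_smul]
    simp only [LinearMap.add_apply, LinearMap.smul_apply, inner_add_right,
      real_inner_smul_right]
    have h1 : (Matrix.toEuclideanLin (1 : Matrix (Fin n) (Fin n) ℝ)) y = y := by
      simp [Matrix.toEuclideanLin_apply]
    have h2 : inner ℝ y (Matrix.toEuclideanLin (W * Wᵀ) y) = (‖z‖^2 : ℝ) := by
      rw [toE_mul, hadj, LinearMap.adjoint_inner_right, ← hz, real_inner_self_eq_norm_sq]
    rw [h1, h2, real_inner_self_eq_norm_sq]
  have hinner2 : inner ℝ y (Matrix.toEuclideanLin W x) ≤ ‖z‖ * ‖x‖ := by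
    rw [hadj, LinearMap.adjoint_inner_right, ← hz]
    exact real_inner_le_norm z x
  have hmain : ‖y‖^2 + β * ‖z‖^2 ≤ ‖z‖ * ‖x‖ := by
    rw [← hinner1, hNy]; exact hinner2
  have hy2 : ‖y‖^2 ≤ ‖x‖^2 / (4 * β) := by
    rw [le_div_iff₀ (by positivity)]
    nlinarith [sq_nonneg (‖x‖ - 2 * β * ‖z‖), sq_nonneg ‖z‖]
  have hs : 0 < Real.sqrt β := Real.sqrt_pos.mpr hβ
  have hs2 : Real.sqrt β ^ 2 = β := Real.sq_sqrt hβ.le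
  have hnorm : ‖Matrix.toEuclideanLin ((1 + β) • (N⁻¹ * W)) x‖ = (1 + β) * ‖y‖ := by
    rw [_root_.map_smul, LinearMap.smul_apply, norm_smul, Real.norm_eq_abs,
      abs_of_pos (by linarith)]
  have hkey2 : (1 + β)^2 * ‖y‖^2 * (4 * β) ≤ (1 + β)^2 * ‖x‖^2 := by
    rw [le_div_iff₀ (by positivity)] at hy2
    nlinarith [sq_nonneg (1 + β)]
  have hsum : Real.sqrt β + 1 / Real.sqrt β = (β + 1) / Real.sqrt β := by
    rw [eq_div_iff hs.ne', add_mul, one_div, inv_mul_cancel₀ hs.ne', Real.mul_self_sqrt hβ.le]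
  have hc2 : ((Real.sqrt β + 1 / Real.sqrt β) / 2)^2 * (4 * β) = (1 + β)^2 := by
    rw [hsum]
    have : ((β + 1) / Real.sqrt β / 2)^2 * (4 * β) = (β + 1)^2 / (Real.sqrt β^2) * β := by
      ring
    rw [this, hs2, div_mul_cancel₀ _ hβ.ne']
    ring
  have hsq : ((1 + β) * ‖y‖)^2 * (4 * β)
      ≤ ((((Real.sqrt β + 1 / Real.sqrt β) / 2)) * ‖x‖)^2 * (4 * β) := by
    calc ((1 + β) * ‖y‖)^2 * (4 * β) = (1 + β)^2 * ‖y‖^2 * (4 * β) := by ring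
      _ ≤ (1 + β)^2 * ‖x‖^2 := hkey2
      _ = ((((Real.sqrt β + 1 / Real.sqrt β) / 2)) * ‖x‖)^2 * (4 * β) := by
          rw [mul_pow, ← hc2]; ring
  have hfin0 := le_of_mul_le_mul_right hsq (by positivity)
  have hfin := Real.sqrt_le_sqrt hfin0
  rw [Real.sqrt_sq (by positivity), Real.sqrt_sq (by positivity)] at hfin
  rw [hnorm]
  exact hfin

/-- For `β > 0` the operator norm of `A_β = (1+β)(I + β W Wᵀ)⁻¹ W`
is at most `(√β + 1/√β)/2`, and the affine map
`x ↦ A_β x + (I + β W Wᵀ)⁻¹ (b + β W c)` is Lipschitz with that constant. -/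
theorem stmt1 {n m : ℕ} (β : ℝ) (hβ : 0 < β)
    (W : Matrix (Fin n) (Fin m) ℝ)
    (b : EuclideanSpace ℝ (Fin n)) (c : EuclideanSpace ℝ (Fin m)) :
    ‖LinearMap.toContinuousLinearMap
        (Matrix.toEuclideanLin ((1 + β) • (((1 : Matrix (Fin n) (Fin n) ℝ) + β • (W * Wᵀ))⁻¹ * W)))‖
      ≤ (Real.sqrt β + 1 / Real.sqrt β) / 2 ∧
    ∀ x₁ x₂ : EuclideanSpace ℝ (Fin m),
      ‖(Matrix.toEuclideanLin ((1 + β) • (((1 : Matrix (Fin n) (Fin n) ℝ) + β • (W * Wᵀ))⁻¹ * W)) x₁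
          + Matrix.toEuclideanLin ((1 : Matrix (Fin n) (Fin n) ℝ) + β • (W * Wᵀ))⁻¹
              (b + β • Matrix.toEuclideanLin W c))
        - (Matrix.toEuclideanLin ((1 + β) • (((1 : Matrix (Fin n) (Fin n) ℝ) + β • (W * Wᵀ))⁻¹ * W)) x₂
          + Matrix.toEuclideanLin ((1 : Matrix (Fin n) (Fin n) ℝ) + β • (W * Wᵀ))⁻¹
              (b + β • Matrix.toEuclideanLin W c))‖
      ≤ ((Real.sqrt β + 1 / Real.sqrt β) / 2) * ‖x₁ - x₂‖ := by
  have hs : 0 < Real.sqrt β := Real.sqrt_pos.mpr hβ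
  constructor
  · refine ContinuousLinearMap.opNorm_le_bound _ (by positivity) (fun x => ?_)
    simpa using stmt1_key β hβ W x
  · intro x₁ x₂
    rw [add_sub_add_right_eq_sub, ← map_sub]
    exact stmt1_key β hβ W (x₁ - x₂)
end

section
/- Let β > 0, let W be a real n×m matrix, let G : ℝ^n → ℝ be a convex function, and let C ⊆ ℝ^n be a nonempty closed convex set. For x ∈ ℝ^m define F_x(z) = (1/2)‖z − Wx‖² + (β/2)‖Wᵀz − x‖² + G(z). If z₁ minimizes F_{x₁} over C and z₂ minimizes F_{x₂} over C, then ‖z₁ − z₂‖ ≤ ((β^{1/2} + β^{-1/2})/2)·‖x₁ − x₂‖. In other words, the map P_{β,W,G} sending x to the minimizer of F_x over C is Lipschitz continuous with constant (β^{1/2} + β^{-1/2})/2. -/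
open Matrix

set_option maxHeartbeats 1000000 in
/-- (Lemma 1 of the paper.) Let `β > 0`, `W` a real `n × m` matrix,
`G` convex, `C` a nonempty closed convex set. If `z₁` minimizes
`F_{x₁}(z) = (1/2)‖z − Wx₁‖² + (β/2)‖Wᵀz − x₁‖² + G(z)` over `C` and `z₂` minimizes
`F_{x₂}` over `C`, then `‖z₁ − z₂‖ ≤ ((√β + 1/√β)/2)‖x₁ − x₂‖`, i.e. the map
`P_{β,W,G}` is `((√β + β^{-1/2})/2)`-Lipschitz. -/
theorem stmt3 {n m : ℕ} (β : ℝ) (hβ : 0 < β)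
    (W : Matrix (Fin n) (Fin m) ℝ)
    (G : EuclideanSpace ℝ (Fin n) → ℝ) (hG : ConvexOn ℝ Set.univ G)
    (C : Set (EuclideanSpace ℝ (Fin n)))
    (hCne : C.Nonempty) (hCcl : IsClosed C) (hCcv : Convex ℝ C)
    (x₁ x₂ : EuclideanSpace ℝ (Fin m))
    (z₁ z₂ : EuclideanSpace ℝ (Fin n))
    (hz₁ : z₁ ∈ C ∧ ∀ z ∈ C,
      (1/2) * ‖z₁ - Matrix.toEuclideanLin W x₁‖ ^ 2
          + (β/2) * ‖Matrix.toEuclideanLin Wᵀ z₁ - x₁‖ ^ 2 + G z₁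
        ≤ (1/2) * ‖z - Matrix.toEuclideanLin W x₁‖ ^ 2
          + (β/2) * ‖Matrix.toEuclideanLin Wᵀ z - x₁‖ ^ 2 + G z)
    (hz₂ : z₂ ∈ C ∧ ∀ z ∈ C,
      (1/2) * ‖z₂ - Matrix.toEuclideanLin W x₂‖ ^ 2
          + (β/2) * ‖Matrix.toEuclideanLin Wᵀ z₂ - x₂‖ ^ 2 + G z₂
        ≤ (1/2) * ‖z - Matrix.toEuclideanLin W x₂‖ ^ 2
          + (β/2) * ‖Matrix.toEuclideanLin Wᵀ z - x₂‖ ^ 2 + G z) :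
    ‖z₁ - z₂‖ ≤ ((Real.sqrt β + 1 / Real.sqrt β) / 2) * ‖x₁ - x₂‖ := by
  set A : EuclideanSpace ℝ (Fin n) →ₗ[ℝ] EuclideanSpace ℝ (Fin m) :=
    Matrix.toEuclideanLin Wᵀ with hA
  set B : EuclideanSpace ℝ (Fin m) →ₗ[ℝ] EuclideanSpace ℝ (Fin n) :=
    Matrix.toEuclideanLin W with hB
  have hadj : ∀ (x : EuclideanSpace ℝ (Fin m)) (z : EuclideanSpace ℝ (Fin n)),
      (inner ℝ (B x) z : ℝ) = inner ℝ x (A z) := by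
    intro x z
    have h : A = LinearMap.adjoint B := by
      rw [hA, hB, ← Matrix.toEuclideanLin_conjTranspose_eq_adjoint]
      congr 1
    rw [h, LinearMap.adjoint_inner_right]
  -- Variational inequality at each minimizer
  have key : ∀ (x : EuclideanSpace ℝ (Fin m)) (z : EuclideanSpace ℝ (Fin n)), z ∈ C →
      (∀ z' ∈ C,
        (1/2) * ‖z - B x‖ ^ 2 + (β/2) * ‖A z - x‖ ^ 2 + G z
          ≤ (1/2) * ‖z' - B x‖ ^ 2 + (β/2) * ‖A z' - x‖ ^ 2 + G z') →
      ∀ z' ∈ C,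
        0 ≤ (inner ℝ (z - B x) (z' - z) : ℝ) + β * (inner ℝ (A z - x) (A (z' - z)) : ℝ)
            + (G z' - G z) := by
    intro x z hzC hmin z' hz'C
    set Δ := z' - z with hΔ
    set L : ℝ := (inner ℝ (z - B x) Δ : ℝ) + β * (inner ℝ (A z - x) (A Δ) : ℝ) + (G z' - G z)
      with hL
    set Q : ℝ := (1/2) * ‖Δ‖ ^ 2 + (β/2) * ‖A Δ‖ ^ 2 with hQdef
    clear_value Δ L Q
    have hQ : 0 ≤ Q := by rw [hQdef]; positivity
    have ht : ∀ t : ℝ, 0 < t → t ≤ 1 → -(t * Q) ≤ L := by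
      intro t ht0 ht1
      have hmem : z + t • Δ ∈ C := by
        have := hCcv hzC hz'C (by linarith : (0:ℝ) ≤ 1 - t) (le_of_lt ht0) (by ring)
        convert this using 1
        rw [hΔ]
        module
      have hGle : G (z + t • Δ) ≤ (1 - t) * G z + t * G z' := by
        have := hG.2 (Set.mem_univ z) (Set.mem_univ z') (by linarith : (0:ℝ) ≤ 1 - t)
          (le_of_lt ht0) (by ring)
        have he : (1 - t) • z + t • z' = z + t • Δ := by rw [hΔ]; module
        rw [he] at this
        simpa using this
      have hF := hmin _ hmem
      have e1 : ‖(z + t • Δ) - B x‖ ^ 2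
          = ‖z - B x‖ ^ 2 + 2 * (t * (inner ℝ (z - B x) Δ : ℝ)) + t ^ 2 * ‖Δ‖ ^ 2 := by
        have : (z + t • Δ) - B x = (z - B x) + t • Δ := by module
        rw [this, norm_add_sq_real, real_inner_smul_right, norm_smul,
          Real.norm_eq_abs, abs_of_pos ht0]
        ring
      have e2 : ‖A (z + t • Δ) - x‖ ^ 2
          = ‖A z - x‖ ^ 2 + 2 * (t * (inner ℝ (A z - x) (A Δ) : ℝ)) + t ^ 2 * ‖A Δ‖ ^ 2 := by
        have : A (z + t • Δ) - x = (A z - x) + t • (A Δ) := by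
          rw [map_add, _root_.map_smul]; module
        rw [this, norm_add_sq_real, real_inner_smul_right, norm_smul,
          Real.norm_eq_abs, abs_of_pos ht0]
        ring
      rw [e1, e2] at hF
      have hstep : 0 ≤ t * (L + t * Q) := by
        rw [hL, hQdef]
        nlinarith [hF, hGle]
      have h5 : 0 ≤ L + t * Q := by
        by_contra h
        push_neg at h
        have := mul_neg_of_pos_of_neg ht0 h
        linarith
      linarith
    by_contra hneg
    push_neg at hneg
    have hr : 0 < -L := by linarith
    have hden : 0 < Q + (-L) := by linarith
    set t₀ : ℝ := (-L) / (Q + (-L)) with ht₀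
    have ht₀0 : 0 < t₀ := div_pos hr hden
    have ht₀1 : t₀ ≤ 1 := by rw [ht₀, div_le_one hden]; linarith
    have hle := ht t₀ ht₀0 ht₀1
    have h3 : t₀ * Q < -L := by
      rw [ht₀, div_mul_eq_mul_div, div_lt_iff₀ hden]
      nlinarith
    linarith
  -- Apply to both minimizers and add
  have k1 := key x₁ z₁ hz₁.1 hz₁.2 z₂ hz₂.1
  have k2 := key x₂ z₂ hz₂.1 hz₂.2 z₁ hz₁.1
  set Δ := z₁ - z₂ with hΔ
  clear_value Δ
  have hz21 : z₂ - z₁ = -Δ := by rw [hΔ]; module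
  -- rewrite k1, k2 in terms of Δ
  have k1' : 0 ≤ -(inner ℝ (z₁ - B x₁) Δ : ℝ) - β * (inner ℝ (A z₁ - x₁) (A Δ) : ℝ)
      + (G z₂ - G z₁) := by
    have e1 : (inner ℝ (z₁ - B x₁) (z₂ - z₁) : ℝ) = -(inner ℝ (z₁ - B x₁) Δ : ℝ) := by
      rw [hz21, inner_neg_right]
    have e2 : (inner ℝ (A z₁ - x₁) (A (z₂ - z₁)) : ℝ)
        = -(inner ℝ (A z₁ - x₁) (A Δ) : ℝ) := by
      rw [hz21, map_neg, inner_neg_right]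
    rw [e1, e2] at k1
    linarith
  have k2' : 0 ≤ (inner ℝ (z₂ - B x₂) Δ : ℝ) + β * (inner ℝ (A z₂ - x₂) (A Δ) : ℝ)
      + (G z₁ - G z₂) := k2
  have hsum : (inner ℝ Δ Δ : ℝ) + β * (inner ℝ (A Δ) (A Δ) : ℝ)
      ≤ (1 + β) * (inner ℝ (x₁ - x₂) (A Δ) : ℝ) := by
    have e3 : (inner ℝ (z₂ - B x₂) Δ : ℝ) - (inner ℝ (z₁ - B x₁) Δ : ℝ)
        = -(inner ℝ Δ Δ : ℝ) + (inner ℝ (x₁ - x₂) (A Δ) : ℝ) := by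
      have heq : (z₂ - B x₂) - (z₁ - B x₁) = -Δ + B (x₁ - x₂) := by
        rw [hΔ, map_sub]; module
      have h := inner_sub_left (𝕜 := ℝ) (z₂ - B x₂) (z₁ - B x₁) Δ
      rw [heq, inner_add_left, inner_neg_left, hadj] at h
      linarith
    have e4 : (inner ℝ (A z₂ - x₂) (A Δ) : ℝ) - (inner ℝ (A z₁ - x₁) (A Δ) : ℝ)
        = -(inner ℝ (A Δ) (A Δ) : ℝ) + (inner ℝ (x₁ - x₂) (A Δ) : ℝ) := by
      have heq : (A z₂ - x₂) - (A z₁ - x₁) = -(A Δ) + (x₁ - x₂) := by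
        rw [hΔ, map_sub]; module
      have h := inner_sub_left (𝕜 := ℝ) (A z₂ - x₂) (A z₁ - x₁) (A Δ)
      rw [heq, inner_add_left, inner_neg_left] at h
      linarith
    nlinarith [k1', k2']
  -- turn into norms
  have hd : (inner ℝ Δ Δ : ℝ) = ‖Δ‖ ^ 2 := real_inner_self_eq_norm_sq Δ
  have ha : (inner ℝ (A Δ) (A Δ) : ℝ) = ‖A Δ‖ ^ 2 := real_inner_self_eq_norm_sq (A Δ)
  have hcs : (inner ℝ (x₁ - x₂) (A Δ) : ℝ) ≤ ‖x₁ - x₂‖ * ‖A Δ‖ := real_inner_le_norm _ _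
  set d := ‖Δ‖ with hdd
  set a := ‖A Δ‖ with haa
  set e := ‖x₁ - x₂‖ with hee
  have hmain : d ^ 2 + β * a ^ 2 ≤ (1 + β) * (e * a) := by
    rw [hd, ha] at hsum
    have : (1 + β) * (inner ℝ (x₁ - x₂) (A Δ) : ℝ) ≤ (1 + β) * (e * a) := by
      apply mul_le_mul_of_nonneg_left hcs (by linarith)
    linarith
  clear hz₁ hz₂ key k1 k2 k1' k2' hsum hd ha hcs hz21 hG hCcv hCcl hCne hadj
  have hd0 : 0 ≤ d := norm_nonneg _
  have he0 : 0 ≤ e := norm_nonneg _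
  have ha0 : 0 ≤ a := norm_nonneg _
  clear_value d a e
  clear hΔ hdd haa hee Δ
  clear hA hB A B G C x₁ x₂ z₁ z₂ W
  have hs : Real.sqrt β > 0 := Real.sqrt_pos.mpr hβ
  have hs2 : Real.sqrt β * Real.sqrt β = β := Real.mul_self_sqrt hβ.le
  set s := Real.sqrt β with hss
  clear_value s
  have h4β : 4 * β * d ^ 2 ≤ (1 + β) ^ 2 * e ^ 2 := by
    nlinarith [mul_le_mul_of_nonneg_left hmain (by positivity : (0:ℝ) ≤ 4 * β),
      sq_nonneg ((1 + β) * e - 2 * β * a)]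
  have hsq : d ^ 2 ≤ ((s + 1 / s) / 2) ^ 2 * e ^ 2 := by
    have hsv : (s + 1 / s) / 2 = (1 + β) / (2 * s) := by
      field_simp
      nlinarith [hs2]
    rw [hsv, div_pow, div_mul_eq_mul_div, le_div_iff₀ (by nlinarith [hs] : (0:ℝ) < (2 * s) ^ 2)]
    nlinarith [h4β, hs2]
  have hs' : 0 < 1 / s := by
    rw [one_div]
    exact inv_pos.mpr hs
  have hK : 0 ≤ (s + 1 / s) / 2 * e := mul_nonneg (by linarith) he0
  nlinarith [hsq, hd0, hK, sq_nonneg (d - (s + 1 / s) / 2 * e), sq_nonneg (d + (s + 1 / s) / 2 * e)]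
end

section
/- Let W be a real n×m matrix, let G : ℝ^n → ℝ be a convex function, and let C ⊆ ℝ^n be a nonempty closed convex set. For x ∈ ℝ^m define F_x(z) = (1/2)‖z − Wx‖² + (1/2)‖Wᵀz − x‖² + G(z). If z₁ minimizes F_{x₁} over C and z₂ minimizes F_{x₂} over C, then ‖z₁ − z₂‖ ≤ ‖x₁ − x₂‖; that is, the map P_{1,W,G} sending x to the minimizer of F_x over C is 1-Lipschitz (non-expansive). -/
open Matrix

/-- If `z` minimizes `½‖z-a‖² + ½‖Bz-b‖² + G z` over a convex set `C`, then the
variational inequality holds at any `z' ∈ C`. -/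
lemma key_varineq {E F : Type*} [NormedAddCommGroup E] [InnerProductSpace ℝ E]
    [NormedAddCommGroup F] [InnerProductSpace ℝ F]
    (B : E →ₗ[ℝ] F) (a : E) (b : F) (G : E → ℝ) (hG : ConvexOn ℝ Set.univ G)
    (C : Set E) (hCcv : Convex ℝ C) (z : E) (hzC : z ∈ C)
    (hmin : ∀ w ∈ C, (1/2)*‖z-a‖^2 + (1/2)*‖B z - b‖^2 + G z
      ≤ (1/2)*‖w-a‖^2 + (1/2)*‖B w - b‖^2 + G w)
    (z' : E) (hz'C : z' ∈ C) :
    0 ≤ inner ℝ (z - a) (z' - z) + inner ℝ (B z - b) (B z' - B z) + (G z' - G z) := by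
  set d : E := z' - z with hd
  set S : ℝ := inner ℝ (z - a) (z' - z) + inner ℝ (B z - b) (B z' - B z) + (G z' - G z) with hS
  set Q : ℝ := (‖d‖^2 + ‖B d‖^2)/2 with hQ
  have hQ0 : 0 ≤ Q := by positivity
  have hstep : ∀ t : ℝ, 0 < t → t ≤ 1 → 0 ≤ t * S + t^2 * Q := by
    intro t ht0 ht1
    have hw : z + t • d ∈ C := by
      have := hCcv hzC hz'C (by linarith : (0:ℝ) ≤ 1 - t) ht0.le (by ring)
      convert this using 1
      rw [hd]; module
    have h1 : ‖z + t • d - a‖^2 = ‖z-a‖^2 + 2*t*inner ℝ (z-a) d + t^2*‖d‖^2 := by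
      have e1 : z + t • d - a = (z - a) + t • d := by abel
      rw [e1, norm_add_sq_real, real_inner_smul_right, norm_smul]
      simp [mul_pow, sq_abs]; ring
    have h2 : ‖B (z + t • d) - b‖^2
        = ‖B z - b‖^2 + 2*t*inner ℝ (B z - b) (B d) + t^2*‖B d‖^2 := by
      have e2 : B (z + t • d) - b = (B z - b) + t • B d := by
        rw [map_add, B.map_smul]; abel
      rw [e2, norm_add_sq_real, real_inner_smul_right, norm_smul]
      simp [mul_pow, sq_abs]; ring
    have h3 : G (z + t • d) ≤ (1 - t) * G z + t * G z' := by
      have := hG.2 (Set.mem_univ z) (Set.mem_univ z') (by linarith : (0:ℝ) ≤ 1 - t) ht0.le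
        (by ring : (1 - t) + t = 1)
      calc G (z + t • d) = G ((1-t) • z + t • z') := by
            congr 1; rw [hd]; module
        _ ≤ (1 - t) * G z + t * G z' := this
    have hm := hmin (z + t • d) hw
    have hBd : (inner ℝ (B z - b) (B z' - B z) : ℝ) = inner ℝ (B z - b) (B d) := by
      rw [hd, map_sub]
    rw [h1, h2] at hm
    rw [hS, hBd]
    nlinarith [hm, h3]
  by_contra hSneg
  push_neg at hSneg
  have hq1' : (0:ℝ) < Q + 1 := by linarith
  have ht0 : (0:ℝ) < min 1 (-S/(2*(Q+1))) := by
    apply lt_min one_pos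
    apply div_pos (by linarith) (by linarith)
  have := hstep _ ht0 (min_le_left _ _)
  set t := min 1 (-S/(2*(Q+1))) with htdef
  have htle : t ≤ -S/(2*(Q+1)) := min_le_right _ _
  have hq1 : (0:ℝ) < Q + 1 := by linarith
  have h5 : t * Q ≤ (-S/(2*(Q+1))) * (Q+1) := by
    apply mul_le_mul htle (by linarith) hQ0 (by apply div_nonneg (by linarith) (by linarith))
  have h6 : (-S/(2*(Q+1))) * (Q+1) = -S/2 := by field_simp
  nlinarith [this, ht0]

/-- (Corollary: `P_{1,W,G}` is 1-Lipschitz.) With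
`F_x(z) = (1/2)‖z − Wx‖² + (1/2)‖Wᵀz − x‖² + G(z)`, if `z₁` minimizes `F_{x₁}`
over the nonempty closed convex set `C` and `z₂` minimizes `F_{x₂}` over `C`,
then `‖z₁ − z₂‖ ≤ ‖x₁ − x₂‖`. -/
theorem stmt4 {n m : ℕ}
    (W : Matrix (Fin n) (Fin m) ℝ)
    (G : EuclideanSpace ℝ (Fin n) → ℝ) (hG : ConvexOn ℝ Set.univ G)
    (C : Set (EuclideanSpace ℝ (Fin n)))
    (hCne : C.Nonempty) (hCcl : IsClosed C) (hCcv : Convex ℝ C)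
    (x₁ x₂ : EuclideanSpace ℝ (Fin m))
    (z₁ z₂ : EuclideanSpace ℝ (Fin n))
    (hz₁ : z₁ ∈ C ∧ ∀ z ∈ C,
      (1/2) * ‖z₁ - Matrix.toEuclideanLin W x₁‖ ^ 2
          + (1/2) * ‖Matrix.toEuclideanLin Wᵀ z₁ - x₁‖ ^ 2 + G z₁
        ≤ (1/2) * ‖z - Matrix.toEuclideanLin W x₁‖ ^ 2
          + (1/2) * ‖Matrix.toEuclideanLin Wᵀ z - x₁‖ ^ 2 + G z)
    (hz₂ : z₂ ∈ C ∧ ∀ z ∈ C,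
      (1/2) * ‖z₂ - Matrix.toEuclideanLin W x₂‖ ^ 2
          + (1/2) * ‖Matrix.toEuclideanLin Wᵀ z₂ - x₂‖ ^ 2 + G z₂
        ≤ (1/2) * ‖z - Matrix.toEuclideanLin W x₂‖ ^ 2
          + (1/2) * ‖Matrix.toEuclideanLin Wᵀ z - x₂‖ ^ 2 + G z) :
    ‖z₁ - z₂‖ ≤ ‖x₁ - x₂‖ := by
  set A := Matrix.toEuclideanLin W with hA
  set B := Matrix.toEuclideanLin Wᵀ with hB
  have hadj : ∀ (z : EuclideanSpace ℝ (Fin n)) (x : EuclideanSpace ℝ (Fin m)),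
      inner ℝ (B z) x = (inner ℝ z (A x) : ℝ) := by
    intro z x
    rw [hB, hA, show Wᵀ = Wᴴ by ext i j; simp [Matrix.conjTranspose],
      Matrix.toEuclideanLin_conjTranspose_eq_adjoint, LinearMap.adjoint_inner_left]
  have hS₁ := key_varineq B (A x₁) x₁ G hG C hCcv z₁ hz₁.1 (fun w hw => hz₁.2 w hw) z₂ hz₂.1
  have hS₂ := key_varineq B (A x₂) x₂ G hG C hCcv z₂ hz₂.1 (fun w hw => hz₂.2 w hw) z₁ hz₁.1
  set d : EuclideanSpace ℝ (Fin n) := z₁ - z₂ with hd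
  set e : EuclideanSpace ℝ (Fin m) := x₁ - x₂ with he
  have key : ‖d‖^2 + ‖B d‖^2 ≤ 2 * inner ℝ (B d) e := by
    have hnorm1 : ‖d‖^2 = inner ℝ d d := (real_inner_self_eq_norm_sq d).symm
    have hnorm2 : ‖B d‖^2 = inner ℝ (B d) (B d) := (real_inner_self_eq_norm_sq (B d)).symm
    rw [hnorm1, hnorm2]
    have h1 := hadj z₁ x₁
    have h2 := hadj z₁ x₂
    have h3 := hadj z₂ x₁
    have h4 := hadj z₂ x₂
    simp only [hd, he, map_sub, inner_sub_left, inner_sub_right] at hS₁ hS₂ h1 h2 h3 h4 ⊢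
    have c1 : (inner ℝ z₁ z₂ : ℝ) = inner ℝ z₂ z₁ := real_inner_comm _ _
    have c2 : (inner ℝ (B z₁) (B z₂) : ℝ) = inner ℝ (B z₂) (B z₁) := real_inner_comm _ _
    have c3 : (inner ℝ (A x₁) z₁ : ℝ) = inner ℝ z₁ (A x₁) := real_inner_comm _ _
    have c4 : (inner ℝ (A x₁) z₂ : ℝ) = inner ℝ z₂ (A x₁) := real_inner_comm _ _
    have c5 : (inner ℝ (A x₂) z₁ : ℝ) = inner ℝ z₁ (A x₂) := real_inner_comm _ _
    have c6 : (inner ℝ (A x₂) z₂ : ℝ) = inner ℝ z₂ (A x₂) := real_inner_comm _ _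
    have c7 : (inner ℝ x₁ (B z₁) : ℝ) = inner ℝ (B z₁) x₁ := real_inner_comm _ _
    have c8 : (inner ℝ x₁ (B z₂) : ℝ) = inner ℝ (B z₂) x₁ := real_inner_comm _ _
    have c9 : (inner ℝ x₂ (B z₁) : ℝ) = inner ℝ (B z₁) x₂ := real_inner_comm _ _
    have c10 : (inner ℝ x₂ (B z₂) : ℝ) = inner ℝ (B z₂) x₂ := real_inner_comm _ _
    linarith
  have hcs : (inner ℝ (B d) e : ℝ) ≤ ‖B d‖ * ‖e‖ := real_inner_le_norm _ _
  nlinarith [norm_nonneg d, norm_nonneg e, norm_nonneg (B d), key, hcs, sq_nonneg (‖B d‖ - ‖e‖), sq_nonneg (‖d‖ + ‖e‖)]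
end

section
/- Let W be a real n×m matrix, let G : ℝ^n → ℝ be a convex function, and let C ⊆ ℝ^n be a nonempty closed convex set. For x ∈ ℝ^m define F_x(z) = (1/2)‖z − Wx‖² + G(z). If z₁ minimizes F_{x₁} over C and z₂ minimizes F_{x₂} over C, then ‖z₁ − z₂‖ ≤ ‖W‖₂·‖x₁ − x₂‖, where ‖W‖₂ is the operator norm of W with respect to the Euclidean norms; i.e., the map P_{0,W,G} sending x to the minimizer of F_x over C is ‖W‖₂-Lipschitz. -/
open Matrix

/-- (Lemma 2 of the paper: `P_{0,W,G}` is `‖W‖₂`-Lipschitz.) With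
`F_x(z) = (1/2)‖z − Wx‖² + G(z)`, if `z₁` minimizes `F_{x₁}` over the nonempty
closed convex set `C` and `z₂` minimizes `F_{x₂}` over `C`, then
`‖z₁ − z₂‖ ≤ ‖W‖₂ ‖x₁ − x₂‖`, where `‖W‖₂` is the Euclidean operator norm of `W`. -/
theorem stmt5 {n m : ℕ}
    (W : Matrix (Fin n) (Fin m) ℝ)
    (G : EuclideanSpace ℝ (Fin n) → ℝ) (hG : ConvexOn ℝ Set.univ G)
    (C : Set (EuclideanSpace ℝ (Fin n)))
    (hCne : C.Nonempty) (hCcl : IsClosed C) (hCcv : Convex ℝ C)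
    (x₁ x₂ : EuclideanSpace ℝ (Fin m))
    (z₁ z₂ : EuclideanSpace ℝ (Fin n))
    (hz₁ : z₁ ∈ C ∧ ∀ z ∈ C,
      (1/2) * ‖z₁ - Matrix.toEuclideanLin W x₁‖ ^ 2 + G z₁
        ≤ (1/2) * ‖z - Matrix.toEuclideanLin W x₁‖ ^ 2 + G z)
    (hz₂ : z₂ ∈ C ∧ ∀ z ∈ C,
      (1/2) * ‖z₂ - Matrix.toEuclideanLin W x₂‖ ^ 2 + G z₂
        ≤ (1/2) * ‖z - Matrix.toEuclideanLin W x₂‖ ^ 2 + G z) :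
    ‖z₁ - z₂‖ ≤ ‖LinearMap.toContinuousLinearMap (Matrix.toEuclideanLin W)‖ * ‖x₁ - x₂‖ := by
  set w₁ : EuclideanSpace ℝ (Fin n) := Matrix.toEuclideanLin W x₁ with hw₁
  set w₂ : EuclideanSpace ℝ (Fin n) := Matrix.toEuclideanLin W x₂ with hw₂
  -- key variational inequality (approximate)
  have key : ∀ (w z z' : EuclideanSpace ℝ (Fin n)), z ∈ C → z' ∈ C →
      (∀ u ∈ C, (1/2) * ‖z - w‖ ^ 2 + G z ≤ (1/2) * ‖u - w‖ ^ 2 + G u) →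
      ∀ t : ℝ, 0 < t → t ≤ 1 →
      0 ≤ inner ℝ (z - w) (z' - z) + t / 2 * ‖z' - z‖ ^ 2 + (G z' - G z) := by
    intro w z z' hzC hz'C hmin t ht ht1
    have hmem : (1 - t) • z + t • z' ∈ C :=
      hCcv hzC hz'C (by linarith) ht.le (by ring)
    have h1 := hmin _ hmem
    have heq : (1 - t) • z + t • z' - w = (z - w) + t • (z' - z) := by
      module
    have hnorm : ‖(1 - t) • z + t • z' - w‖ ^ 2
        = ‖z - w‖ ^ 2 + 2 * t * inner ℝ (z - w) (z' - z) + t ^ 2 * ‖z' - z‖ ^ 2 := by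
      rw [heq, norm_add_sq_real, real_inner_smul_right, norm_smul,
        Real.norm_eq_abs, abs_of_pos ht]
      ring
    have hGc : G ((1 - t) • z + t • z') ≤ (1 - t) * G z + t * G z' :=
      hG.2 (Set.mem_univ z) (Set.mem_univ z') (by linarith) ht.le (by ring)
    rw [hnorm] at h1
    set I : ℝ := inner ℝ (z - w) (z' - z) with hI
    set B : ℝ := ‖z' - z‖ ^ 2 with hBdef
    have hB0 : 0 ≤ B := by positivity
    have h2 : 0 ≤ t * (I + t / 2 * B + (G z' - G z)) := by nlinarith [h1, hGc]
    have := le_of_mul_le_mul_left (by linarith : t * 0 ≤ t * (I + t / 2 * B + (G z' - G z))) ht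
    linarith
  -- pass to the limit t → 0
  have hsum : ‖z₁ - z₂‖ ^ 2 ≤ inner ℝ (w₁ - w₂) (z₁ - z₂) := by
    have hlim : ∀ ε : ℝ, 0 < ε → ‖z₁ - z₂‖ ^ 2 ≤ inner ℝ (w₁ - w₂) (z₁ - z₂) + ε := by
      intro ε hε
      set B := ‖z₁ - z₂‖ ^ 2 with hB
      have hB0 : 0 ≤ B := by positivity
      set t : ℝ := min 1 (ε / (B + 1)) with htdef
      have ht0 : 0 < t := lt_min one_pos (by positivity)
      have ht1 : t ≤ 1 := min_le_left _ _
      have k1 := key w₁ z₁ z₂ hz₁.1 hz₂.1 hz₁.2 t ht0 ht1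
      have k2 := key w₂ z₂ z₁ hz₂.1 hz₁.1 hz₂.2 t ht0 ht1
      have e1 : (inner ℝ (z₁ - w₁) (z₂ - z₁) : ℝ) + inner ℝ (z₂ - w₂) (z₁ - z₂)
          = inner ℝ (w₁ - w₂) (z₁ - z₂) - ‖z₁ - z₂‖ ^ 2 := by
        rw [← real_inner_self_eq_norm_sq]
        simp only [inner_sub_left, inner_sub_right]
        ring
      have e2 : ‖z₂ - z₁‖ = ‖z₁ - z₂‖ := by rw [norm_sub_rev]
      have htB : t * B ≤ ε := by
        have h3 : t ≤ ε / (B + 1) := min_le_right _ _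
        have : t * B ≤ (ε / (B + 1)) * B := by nlinarith
        have : (ε / (B + 1)) * B ≤ ε := by
          rw [div_mul_eq_mul_div, div_le_iff₀ (by positivity)]
          nlinarith
        linarith
      rw [e2] at k1
      have htB' : t / 2 * ‖z₁ - z₂‖ ^ 2 + t / 2 * ‖z₁ - z₂‖ ^ 2 = t * B := by
        rw [hB]; ring
      linarith [k1, k2, e1, htB, htB', hB]
    by_contra hcon
    push_neg at hcon
    have := hlim ((‖z₁ - z₂‖ ^ 2 - inner ℝ (w₁ - w₂) (z₁ - z₂)) / 2) (by linarith)
    linarith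
  have hineq : ‖z₁ - z₂‖ ≤ ‖w₁ - w₂‖ := by
    rcases eq_or_lt_of_le (norm_nonneg (z₁ - z₂)) with h0 | h0
    · rw [← h0]; exact norm_nonneg _
    · have := le_trans hsum (real_inner_le_norm (w₁ - w₂) (z₁ - z₂))
      nlinarith
  set T := LinearMap.toContinuousLinearMap (Matrix.toEuclideanLin W)
  have hwT : w₁ - w₂ = T (x₁ - x₂) := by
    simp [hw₁, hw₂, T, map_sub]
  calc ‖z₁ - z₂‖ ≤ ‖w₁ - w₂‖ := hineq
    _ = ‖T (x₁ - x₂)‖ := by rw [hwT]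
    _ ≤ ‖T‖ * ‖x₁ - x₂‖ := T.le_opNorm _
end

section
/- Let β ≥ 0, let W be a real n×m matrix, let G : ℝ^n → ℝ be a convex function, and let C ⊆ ℝ^n be a nonempty closed convex set. For x ∈ ℝ^m define F_x(z) = (1/2)‖z − Wx‖² + (β/2)‖Wᵀz − x‖² + G(z). If z₁ minimizes F_{x₁} over C and z₂ minimizes F_{x₂} over C, then (1+β)·⟨x₁ − x₂, Wᵀ(z₁ − z₂)⟩ ≥ ‖z₁ − z₂‖² + β·‖Wᵀ(z₁ − z₂)‖², where ⟨·,·⟩ is the Euclidean inner product. -/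
open Matrix
open scoped RealInnerProductSpace

private lemma real_aux (q D : ℝ) (hq0 : 0 ≤ q)
    (key : ∀ t : ℝ, 0 < t → t ≤ 1 → (1 - t) * q / 2 ≤ D) : q / 2 ≤ D := by
  by_contra hcon
  push_neg at hcon
  have hD0 : 0 ≤ D := by have := key 1 one_pos le_rfl; linarith
  have hqpos : 0 < q := by linarith
  have ht0 : 0 < (q / 2 - D) / q := div_pos (by linarith) hqpos
  have ht1 : (q / 2 - D) / q ≤ 1 := by rw [div_le_one hqpos]; linarith
  have h2 := key _ ht0 ht1
  have htq : (q / 2 - D) / q * q = q / 2 - D := div_mul_cancel₀ _ (ne_of_gt hqpos)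
  nlinarith

private lemma combo_norm_sq {E : Type*} [NormedAddCommGroup E] [InnerProductSpace ℝ E]
    (u v : E) (t : ℝ) :
    ‖(1 - t) • u + t • v‖ ^ 2 = (1 - t) * ‖u‖ ^ 2 + t * ‖v‖ ^ 2 - t * (1 - t) * ‖u - v‖ ^ 2 := by
  rw [← real_inner_self_eq_norm_sq, ← real_inner_self_eq_norm_sq,
    ← real_inner_self_eq_norm_sq, ← real_inner_self_eq_norm_sq]
  simp only [inner_add_left, inner_add_right, inner_sub_left, inner_sub_right,
    inner_smul_left, inner_smul_right, RCLike.star_def, starRingEnd_apply, star_trivial]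
  rw [real_inner_comm v u]
  ring

private lemma strong_min {E F : Type*} [NormedAddCommGroup E] [InnerProductSpace ℝ E]
    [NormedAddCommGroup F] [InnerProductSpace ℝ F]
    (β : ℝ) (hβ : 0 ≤ β) (T : E →ₗ[ℝ] F) (G : E → ℝ) (hG : ConvexOn ℝ Set.univ G)
    (C : Set E) (hCcv : Convex ℝ C) (a : E) (b : F) (z₁ z₂ : E)
    (h₁ : z₁ ∈ C) (h₂ : z₂ ∈ C)
    (hmin : ∀ z ∈ C, (1/2) * ‖z₁ - a‖ ^ 2 + (β/2) * ‖T z₁ - b‖ ^ 2 + G z₁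
        ≤ (1/2) * ‖z - a‖ ^ 2 + (β/2) * ‖T z - b‖ ^ 2 + G z) :
    (1/2) * ‖z₁ - a‖ ^ 2 + (β/2) * ‖T z₁ - b‖ ^ 2 + G z₁
        + (‖z₁ - z₂‖ ^ 2 + β * ‖T (z₁ - z₂)‖ ^ 2) / 2
      ≤ (1/2) * ‖z₂ - a‖ ^ 2 + (β/2) * ‖T z₂ - b‖ ^ 2 + G z₂ := by
  have main : (‖z₁ - z₂‖ ^ 2 + β * ‖T (z₁ - z₂)‖ ^ 2) / 2
      ≤ ((1/2) * ‖z₂ - a‖ ^ 2 + (β/2) * ‖T z₂ - b‖ ^ 2 + G z₂)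
        - ((1/2) * ‖z₁ - a‖ ^ 2 + (β/2) * ‖T z₁ - b‖ ^ 2 + G z₁) := by
    refine real_aux _ _ (by positivity) ?_
    intro t ht0 ht1
    have hmem : (1 - t) • z₁ + t • z₂ ∈ C := hCcv h₁ h₂ (by linarith) ht0.le (by ring)
    have h0 := hmin _ hmem
    have hGc : G ((1 - t) • z₁ + t • z₂) ≤ (1 - t) * G z₁ + t * G z₂ :=
      hG.2 (Set.mem_univ z₁) (Set.mem_univ z₂) (by linarith) ht0.le (by ring)
    have e1 : (1 - t) • z₁ + t • z₂ - a = (1 - t) • (z₁ - a) + t • (z₂ - a) := by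
      module
    have e2 : T ((1 - t) • z₁ + t • z₂) - b = (1 - t) • (T z₁ - b) + t • (T z₂ - b) := by
      rw [map_add, LinearMap.map_smul, LinearMap.map_smul]
      module
    have n1 : ‖(1 - t) • z₁ + t • z₂ - a‖ ^ 2
        = (1 - t) * ‖z₁ - a‖ ^ 2 + t * ‖z₂ - a‖ ^ 2 - t * (1 - t) * ‖z₁ - z₂‖ ^ 2 := by
      rw [e1, combo_norm_sq]
      congr 3
      abel
    have n2 : ‖T ((1 - t) • z₁ + t • z₂) - b‖ ^ 2
        = (1 - t) * ‖T z₁ - b‖ ^ 2 + t * ‖T z₂ - b‖ ^ 2 - t * (1 - t) * ‖T (z₁ - z₂)‖ ^ 2 := by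
      rw [e2, combo_norm_sq]
      congr 3
      rw [map_sub]
      abel
    rw [n1, n2] at h0
    -- combine h0 with hGc
    have h0' : (1/2) * ‖z₁ - a‖ ^ 2 + (β/2) * ‖T z₁ - b‖ ^ 2 + G z₁
        ≤ (1/2) * ((1 - t) * ‖z₁ - a‖ ^ 2 + t * ‖z₂ - a‖ ^ 2 - t * (1 - t) * ‖z₁ - z₂‖ ^ 2)
          + (β/2) * ((1 - t) * ‖T z₁ - b‖ ^ 2 + t * ‖T z₂ - b‖ ^ 2
              - t * (1 - t) * ‖T (z₁ - z₂)‖ ^ 2)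
          + ((1 - t) * G z₁ + t * G z₂) := by linarith
    have h3 : t * ((1 - t) * ((‖z₁ - z₂‖ ^ 2 + β * ‖T (z₁ - z₂)‖ ^ 2)) / 2)
        - t * (((1/2) * ‖z₂ - a‖ ^ 2 + (β/2) * ‖T z₂ - b‖ ^ 2 + G z₂)
            - ((1/2) * ‖z₁ - a‖ ^ 2 + (β/2) * ‖T z₁ - b‖ ^ 2 + G z₁)) ≤ 0 := by
      have heq : t * ((1 - t) * ((‖z₁ - z₂‖ ^ 2 + β * ‖T (z₁ - z₂)‖ ^ 2)) / 2)
          - t * (((1/2) * ‖z₂ - a‖ ^ 2 + (β/2) * ‖T z₂ - b‖ ^ 2 + G z₂)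
              - ((1/2) * ‖z₁ - a‖ ^ 2 + (β/2) * ‖T z₁ - b‖ ^ 2 + G z₁))
          = ((1/2) * ‖z₁ - a‖ ^ 2 + (β/2) * ‖T z₁ - b‖ ^ 2 + G z₁)
            - ((1/2) * ((1 - t) * ‖z₁ - a‖ ^ 2 + t * ‖z₂ - a‖ ^ 2
                  - t * (1 - t) * ‖z₁ - z₂‖ ^ 2)
              + (β/2) * ((1 - t) * ‖T z₁ - b‖ ^ 2 + t * ‖T z₂ - b‖ ^ 2
                  - t * (1 - t) * ‖T (z₁ - z₂)‖ ^ 2)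
              + ((1 - t) * G z₁ + t * G z₂)) := by ring
      rw [heq]
      linarith
    have h4 : t * ((1 - t) * ((‖z₁ - z₂‖ ^ 2 + β * ‖T (z₁ - z₂)‖ ^ 2)) / 2)
        ≤ t * (((1/2) * ‖z₂ - a‖ ^ 2 + (β/2) * ‖T z₂ - b‖ ^ 2 + G z₂)
            - ((1/2) * ‖z₁ - a‖ ^ 2 + (β/2) * ‖T z₁ - b‖ ^ 2 + G z₁)) := by linarith
    have := le_of_mul_le_mul_left h4 ht0
    linarith
  linarith

/-- (Monotonicity inequality from the proof of Lemma 1.) For `β ≥ 0`,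
if `z₁` minimizes `F_{x₁}(z) = (1/2)‖z − Wx₁‖² + (β/2)‖Wᵀz − x₁‖² + G(z)` over the
nonempty closed convex set `C` and `z₂` minimizes `F_{x₂}` over `C`, then
`(1+β)⟨x₁ − x₂, Wᵀ(z₁ − z₂)⟩ ≥ ‖z₁ − z₂‖² + β‖Wᵀ(z₁ − z₂)‖²`. -/
theorem stmt6 {n m : ℕ} (β : ℝ) (hβ : 0 ≤ β)
    (W : Matrix (Fin n) (Fin m) ℝ)
    (G : EuclideanSpace ℝ (Fin n) → ℝ) (hG : ConvexOn ℝ Set.univ G)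
    (C : Set (EuclideanSpace ℝ (Fin n)))
    (hCne : C.Nonempty) (hCcl : IsClosed C) (hCcv : Convex ℝ C)
    (x₁ x₂ : EuclideanSpace ℝ (Fin m))
    (z₁ z₂ : EuclideanSpace ℝ (Fin n))
    (hz₁ : z₁ ∈ C ∧ ∀ z ∈ C,
      (1/2) * ‖z₁ - Matrix.toEuclideanLin W x₁‖ ^ 2
          + (β/2) * ‖Matrix.toEuclideanLin Wᵀ z₁ - x₁‖ ^ 2 + G z₁
        ≤ (1/2) * ‖z - Matrix.toEuclideanLin W x₁‖ ^ 2
          + (β/2) * ‖Matrix.toEuclideanLin Wᵀ z - x₁‖ ^ 2 + G z)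
    (hz₂ : z₂ ∈ C ∧ ∀ z ∈ C,
      (1/2) * ‖z₂ - Matrix.toEuclideanLin W x₂‖ ^ 2
          + (β/2) * ‖Matrix.toEuclideanLin Wᵀ z₂ - x₂‖ ^ 2 + G z₂
        ≤ (1/2) * ‖z - Matrix.toEuclideanLin W x₂‖ ^ 2
          + (β/2) * ‖Matrix.toEuclideanLin Wᵀ z - x₂‖ ^ 2 + G z) :
    ‖z₁ - z₂‖ ^ 2 + β * ‖Matrix.toEuclideanLin Wᵀ (z₁ - z₂)‖ ^ 2
      ≤ (1 + β) * ⟪x₁ - x₂, Matrix.toEuclideanLin Wᵀ (z₁ - z₂)⟫ := by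
  have h1 := strong_min β hβ (Matrix.toEuclideanLin Wᵀ) G hG C hCcv
    (Matrix.toEuclideanLin W x₁) x₁ z₁ z₂ hz₁.1 hz₂.1 hz₁.2
  have h2 := strong_min β hβ (Matrix.toEuclideanLin Wᵀ) G hG C hCcv
    (Matrix.toEuclideanLin W x₂) x₂ z₂ z₁ hz₂.1 hz₁.1 hz₂.2
  set T := Matrix.toEuclideanLin Wᵀ with hT
  set Wl := Matrix.toEuclideanLin W with hWl
  have hadj : (⟪T (z₁ - z₂), x₁ - x₂⟫ : ℝ) = ⟪z₁ - z₂, Wl (x₁ - x₂)⟫ := by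
    have hTW : T = LinearMap.adjoint Wl := by
      rw [hT, hWl, ← Matrix.toEuclideanLin_conjTranspose_eq_adjoint,
        Matrix.conjTranspose_eq_transpose_of_trivial]
    rw [hTW, LinearMap.adjoint_inner_left]
  have hsym : ‖T (z₂ - z₁)‖ = ‖T (z₁ - z₂)‖ := by
    rw [show z₂ - z₁ = -(z₁ - z₂) by abel, map_neg, norm_neg]
  have hsym2 : ‖z₂ - z₁‖ = ‖z₁ - z₂‖ := by rw [show z₂ - z₁ = -(z₁ - z₂) by abel, norm_neg]
  rw [hsym, hsym2] at h2
  have exp1 : ∀ u v c : EuclideanSpace ℝ (Fin n),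
      ‖u - c‖ ^ 2 = ‖u‖ ^ 2 - 2 * ⟪u, c⟫ + ‖c‖ ^ 2 := fun u v c => norm_sub_sq_real u c
  have exp2 : ∀ u c : EuclideanSpace ℝ (Fin m),
      ‖u - c‖ ^ 2 = ‖u‖ ^ 2 - 2 * ⟪u, c⟫ + ‖c‖ ^ 2 := fun u c => norm_sub_sq_real u c
  have e1 := exp1 z₁ z₁ (Wl x₁)
  have e2 := exp1 z₂ z₁ (Wl x₁)
  have e3 := exp1 z₁ z₁ (Wl x₂)
  have e4 := exp1 z₂ z₁ (Wl x₂)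
  have f1 := exp2 (T z₁) x₁
  have f2 := exp2 (T z₂) x₁
  have f3 := exp2 (T z₁) x₂
  have f4 := exp2 (T z₂) x₂
  have i1 : (⟪z₁ - z₂, Wl (x₁ - x₂)⟫ : ℝ)
      = ⟪z₁, Wl x₁⟫ - ⟪z₁, Wl x₂⟫ - ⟪z₂, Wl x₁⟫ + ⟪z₂, Wl x₂⟫ := by
    rw [map_sub, inner_sub_left, inner_sub_right, inner_sub_right]
    ring
  have i2 : (⟪T (z₁ - z₂), x₁ - x₂⟫ : ℝ)
      = ⟪T z₁, x₁⟫ - ⟪T z₁, x₂⟫ - ⟪T z₂, x₁⟫ + ⟪T z₂, x₂⟫ := by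
    rw [map_sub, inner_sub_left, inner_sub_right, inner_sub_right]
    ring
  have key : ‖z₁ - z₂‖ ^ 2 + β * ‖T (z₁ - z₂)‖ ^ 2
      ≤ ⟪z₁ - z₂, Wl (x₁ - x₂)⟫ + β * ⟪T (z₁ - z₂), x₁ - x₂⟫ := by
    have hsum : ‖z₁ - z₂‖ ^ 2 + β * ‖T (z₁ - z₂)‖ ^ 2
        ≤ ((1/2) * ‖z₂ - Wl x₁‖ ^ 2 + (β/2) * ‖T z₂ - x₁‖ ^ 2
            - (1/2) * ‖z₁ - Wl x₁‖ ^ 2 - (β/2) * ‖T z₁ - x₁‖ ^ 2)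
          + ((1/2) * ‖z₁ - Wl x₂‖ ^ 2 + (β/2) * ‖T z₁ - x₂‖ ^ 2
            - (1/2) * ‖z₂ - Wl x₂‖ ^ 2 - (β/2) * ‖T z₂ - x₂‖ ^ 2) := by linarith
    refine hsum.trans (le_of_eq ?_)
    rw [e1, e2, e3, e4, f1, f2, f3, f4, i1, i2]
    ring
  rw [hadj] at key
  have hcomm : (⟪x₁ - x₂, T (z₁ - z₂)⟫ : ℝ) = ⟪T (z₁ - z₂), x₁ - x₂⟫ :=
    real_inner_comm _ _
  rw [hcomm, hadj]
  linarith
end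

section
/- Consider an L-layer lifted regression/reconstruction network: let d₀, d₁, …, d_L be positive integers, for k = 0, …, L−1 let W_k be a real d_{k+1}×d_k matrix, b_k ∈ ℝ^{d_{k+1}}, c_k ∈ ℝ^{d_k}, let β₁, …, β_L ≥ 0, and let C_k ⊆ ℝ^{d_k} (k = 1, …, L) be nonempty closed convex sets. For an input x ∈ ℝ^{d₀}, define the energy E(z; x) = (1/2)·Σ_{k=0}^{L−1} ( ‖z_{k+1} − W_k z_k − b_k‖² + β_{k+1}·‖W_kᵀ z_{k+1} − z_k − c_k‖² ) for tuples z = (z₁, …, z_L) with z_k ∈ C_k, where z₀ := x. For k = 1, …, L set ρ_k = (β_k^{1/2} + β_k^{-1/2})/2 if β_k > 0 and ρ_k = ‖W_{k−1}‖₂ if β_k = 0. If z* minimizes E(·; x) over C₁×···×C_L and z*' minimizes E(·; x') over C₁×···×C_L, then ‖z*_L − z*'_L‖ ≤ (Π_{k=1}^{L} ρ_k)·‖x − x'‖; that is, the mapping from the input x to the last-layer activations z*_L(x) is Lipschitz continuous with constant Π_{k=1}^{L} ρ_k. -/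
open Matrix
set_option maxHeartbeats 1000000

private lemma theta_lemma' (D Q : ℝ) (h : ∀ θ : ℝ, 0 < θ → θ ≤ 1 → 0 ≤ θ * D + θ ^ 2 * Q) :
    0 ≤ D := by
  by_contra hD
  push_neg at hD
  rcases le_or_gt Q 0 with hQ | hQ
  · have := h 1 one_pos le_rfl; nlinarith
  · have hθpos : 0 < min 1 (-D / (2 * Q)) :=
      lt_min one_pos (div_pos (by linarith) (by linarith))
    have h1 := h _ hθpos (min_le_left _ _)
    have h2 : min 1 (-D / (2 * Q)) ≤ -D / (2 * Q) := min_le_right _ _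
    have h3 : min 1 (-D / (2 * Q)) * (2 * Q) ≤ -D := by
      rw [← le_div_iff₀ (by linarith)]; exact h2
    nlinarith [sq_nonneg (min 1 (-D / (2 * Q)))]

private lemma scalar_pos (βv s t a : ℝ) (hβ : 0 < βv) (hs : 0 ≤ s) (ht : 0 ≤ t) (ha : 0 ≤ a)
    (h : s ^ 2 + βv * t ^ 2 ≤ (1 + βv) * (a * t)) :
    s ≤ (Real.sqrt βv + 1 / Real.sqrt βv) / 2 * a := by
  set r := Real.sqrt βv with hr
  have hrpos : 0 < r := Real.sqrt_pos.mpr hβ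
  have hr2 : r ^ 2 = βv := Real.sq_sqrt hβ.le
  rcases eq_or_lt_of_le ht with ht0 | htpos
  · rw [← ht0] at h
    have hs0 : s = 0 := by nlinarith
    rw [hs0]
    positivity
  · have h1 : 2 * r * s * t ≤ (1 + r ^ 2) * (a * t) := by nlinarith [sq_nonneg (s - r * t)]
    have h2 : 2 * r * s ≤ (1 + r ^ 2) * a := by
      have := le_of_mul_le_mul_right (by linarith : (2 * r * s) * t ≤ ((1 + r ^ 2) * a) * t) htpos
      linarith
    rw [div_mul_eq_mul_div, ← sub_nonneg]
    have : (r + 1 / r) * a - 2 * s = ((1 + r ^ 2) * a - 2 * r * s) / r := by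
      field_simp; ring
    nlinarith [div_nonneg (by linarith : (0:ℝ) ≤ (1 + r ^ 2) * a - 2 * r * s) hrpos.le]

private lemma scalar_zero (s K : ℝ) (hs : 0 ≤ s) (hK : 0 ≤ K) (h : s ^ 2 ≤ K * s) : s ≤ K := by
  rcases eq_or_lt_of_le hs with h0 | h0
  · linarith
  · nlinarith

private lemma sq_expand' {F : Type*} [NormedAddCommGroup F] [InnerProductSpace ℝ F]
    (a p : F) (θ : ℝ) :
    ‖a + θ • p‖ ^ 2 = ‖a‖ ^ 2 + θ * (2 * (inner ℝ a p : ℝ)) + θ ^ 2 * ‖p‖ ^ 2 := by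
  rw [norm_add_sq_real, real_inner_smul_right, norm_smul, Real.norm_eq_abs, mul_pow, sq_abs]
  ring

private lemma layer1 (L : ℕ) (hL : 0 < L)
    (d : ℕ → ℕ)
    (W : (k : ℕ) → Matrix (Fin (d (k + 1))) (Fin (d k)) ℝ)
    (b : (k : ℕ) → EuclideanSpace ℝ (Fin (d (k + 1))))
    (c : (k : ℕ) → EuclideanSpace ℝ (Fin (d k)))
    (β : ℕ → ℝ) (hβ : ∀ k, 1 ≤ k → k ≤ L → 0 ≤ β k)
    (C : (k : ℕ) → Set (EuclideanSpace ℝ (Fin (d k))))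
    (hCcv : ∀ k, 1 ≤ k → k ≤ L → Convex ℝ (C k))
    (E : ((k : ℕ) → EuclideanSpace ℝ (Fin (d k))) → ℝ)
    (hE : ∀ z, E z = (1/2) * ∑ k ∈ Finset.range L,
        (‖z (k + 1) - Matrix.toEuclideanLin (W k) (z k) - b k‖ ^ 2
          + β (k + 1) * ‖Matrix.toEuclideanLin (W k)ᵀ (z (k + 1)) - z k - c k‖ ^ 2))
    (x x' : EuclideanSpace ℝ (Fin (d 0)))
    (zs zs' : (k : ℕ) → EuclideanSpace ℝ (Fin (d k)))
    (hzs : zs 0 = x ∧ (∀ k, 1 ≤ k → k ≤ L → zs k ∈ C k) ∧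
      ∀ z, z 0 = x → (∀ k, 1 ≤ k → k ≤ L → z k ∈ C k) → E zs ≤ E z)
    (hzs' : zs' 0 = x' ∧ (∀ k, 1 ≤ k → k ≤ L → zs' k ∈ C k) ∧
      ∀ z, z 0 = x' → (∀ k, 1 ≤ k → k ≤ L → z k ∈ C k) → E zs' ≤ E z) :
    ‖zs 1 - zs' 1‖ ≤
      (if 0 < β 1 then (Real.sqrt (β 1) + 1 / Real.sqrt (β 1)) / 2
       else ‖LinearMap.toContinuousLinearMap (E := EuclideanSpace ℝ (Fin (d 0))) (Matrix.toEuclideanLin (W 0))‖) * ‖x - x'‖ := by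
  classical
  obtain ⟨hz0, hzC, hzmin⟩ := hzs
  obtain ⟨hz0', hzC', hzmin'⟩ := hzs'
  -- the general quadratic expansion of E along a direction
  have expand : ∀ (z w : (k : ℕ) → EuclideanSpace ℝ (Fin (d k))) (θ : ℝ),
      E (fun k => z k + θ • w k)
        = E z + θ * (∑ k ∈ Finset.range L,
            ((inner ℝ (z (k+1) - Matrix.toEuclideanLin (W k) (z k) - b k)
                (w (k+1) - Matrix.toEuclideanLin (W k) (w k)) : ℝ)
             + β (k+1) * (inner ℝ (Matrix.toEuclideanLin (W k)ᵀ (z (k+1)) - z k - c k)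
                (Matrix.toEuclideanLin (W k)ᵀ (w (k+1)) - w k) : ℝ)))
          + θ ^ 2 * ((1/2) * ∑ k ∈ Finset.range L,
            (‖w (k+1) - Matrix.toEuclideanLin (W k) (w k)‖ ^ 2
             + β (k+1) * ‖Matrix.toEuclideanLin (W k)ᵀ (w (k+1)) - w k‖ ^ 2)) := by
    intro z w θ
    rw [hE, hE]
    have perterm : ∀ k ∈ Finset.range L,
        (‖(fun k => z k + θ • w k) (k + 1)
            - Matrix.toEuclideanLin (W k) ((fun k => z k + θ • w k) k) - b k‖ ^ 2
          + β (k + 1) * ‖Matrix.toEuclideanLin (W k)ᵀ ((fun k => z k + θ • w k) (k + 1))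
            - (fun k => z k + θ • w k) k - c k‖ ^ 2)
        = (‖z (k+1) - Matrix.toEuclideanLin (W k) (z k) - b k‖ ^ 2
            + β (k+1) * ‖Matrix.toEuclideanLin (W k)ᵀ (z (k+1)) - z k - c k‖ ^ 2)
          + (θ * 2) * ((inner ℝ (z (k+1) - Matrix.toEuclideanLin (W k) (z k) - b k)
                (w (k+1) - Matrix.toEuclideanLin (W k) (w k)) : ℝ)
             + β (k+1) * (inner ℝ (Matrix.toEuclideanLin (W k)ᵀ (z (k+1)) - z k - c k)
                (Matrix.toEuclideanLin (W k)ᵀ (w (k+1)) - w k) : ℝ))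
          + θ ^ 2 * (‖w (k+1) - Matrix.toEuclideanLin (W k) (w k)‖ ^ 2
             + β (k+1) * ‖Matrix.toEuclideanLin (W k)ᵀ (w (k+1)) - w k‖ ^ 2) := by
      intro k _
      simp only []
      have e1 : (z (k+1) + θ • w (k+1)) - Matrix.toEuclideanLin (W k) (z k + θ • w k) - b k
          = (z (k+1) - Matrix.toEuclideanLin (W k) (z k) - b k)
            + θ • (w (k+1) - Matrix.toEuclideanLin (W k) (w k)) := by
        rw [map_add, _root_.map_smul]; module
      have e2 : Matrix.toEuclideanLin (W k)ᵀ (z (k+1) + θ • w (k+1)) - (z k + θ • w k) - c k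
          = (Matrix.toEuclideanLin (W k)ᵀ (z (k+1)) - z k - c k)
            + θ • (Matrix.toEuclideanLin (W k)ᵀ (w (k+1)) - w k) := by
        rw [map_add, _root_.map_smul]; module
      rw [e1, e2, sq_expand', sq_expand']
      ring
    rw [Finset.sum_congr rfl perterm, Finset.sum_add_distrib, Finset.sum_add_distrib,
      ← Finset.mul_sum, ← Finset.mul_sum]
    ring
  -- direction of comparison
  set w : (k : ℕ) → EuclideanSpace ℝ (Fin (d k)) :=
    fun k => if k = 0 then 0 else zs' k - zs k with hwdef
  have hw0 : w 0 = 0 := by simp [hwdef]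
  have hwk : ∀ k, 1 ≤ k → w k = zs' k - zs k := by
    intro k hk; simp only [hwdef]; rw [if_neg (by omega)]
  -- feasibility of the perturbed points
  have feas : ∀ θ : ℝ, 0 < θ → θ ≤ 1 →
      (∀ k, 1 ≤ k → k ≤ L → zs k + θ • w k ∈ C k) ∧
      (∀ k, 1 ≤ k → k ≤ L → zs' k + θ • (-(w k)) ∈ C k) := by
    intro θ h0 h1
    constructor
    · intro k hk1 hk2
      have hmem := hCcv k hk1 hk2 (hzC k hk1 hk2) (hzC' k hk1 hk2)
        (by linarith : (0:ℝ) ≤ 1 - θ) h0.le (by ring)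
      have : zs k + θ • w k = (1 - θ) • zs k + θ • zs' k := by
        rw [hwk k hk1]; module
      rw [this]; exact hmem
    · intro k hk1 hk2
      have hmem := hCcv k hk1 hk2 (hzC' k hk1 hk2) (hzC k hk1 hk2)
        (by linarith : (0:ℝ) ≤ 1 - θ) h0.le (by ring)
      have : zs' k + θ • (-(w k)) = (1 - θ) • zs' k + θ • zs k := by
        rw [hwk k hk1]; module
      rw [this]; exact hmem
  -- first variational inequality
  have hD : 0 ≤ ∑ k ∈ Finset.range L,
      ((inner ℝ (zs (k+1) - Matrix.toEuclideanLin (W k) (zs k) - b k)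
          (w (k+1) - Matrix.toEuclideanLin (W k) (w k)) : ℝ)
       + β (k+1) * (inner ℝ (Matrix.toEuclideanLin (W k)ᵀ (zs (k+1)) - zs k - c k)
          (Matrix.toEuclideanLin (W k)ᵀ (w (k+1)) - w k) : ℝ)) := by
    apply theta_lemma' _ ((1/2) * ∑ k ∈ Finset.range L,
      (‖w (k+1) - Matrix.toEuclideanLin (W k) (w k)‖ ^ 2
        + β (k+1) * ‖Matrix.toEuclideanLin (W k)ᵀ (w (k+1)) - w k‖ ^ 2))
    intro θ h0 h1
    have hle := hzmin (fun k => zs k + θ • w k)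
      (by show zs 0 + θ • w 0 = x; rw [hw0, smul_zero, add_zero, hz0])
      (fun k hk1 hk2 => (feas θ h0 h1).1 k hk1 hk2)
    rw [expand zs w θ] at hle
    linarith
  -- second variational inequality
  have hD' : 0 ≤ ∑ k ∈ Finset.range L,
      ((inner ℝ (zs' (k+1) - Matrix.toEuclideanLin (W k) (zs' k) - b k)
          ((-(w (k+1))) - Matrix.toEuclideanLin (W k) (-(w k))) : ℝ)
       + β (k+1) * (inner ℝ (Matrix.toEuclideanLin (W k)ᵀ (zs' (k+1)) - zs' k - c k)
          (Matrix.toEuclideanLin (W k)ᵀ (-(w (k+1))) - (-(w k))) : ℝ)) := by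
    apply theta_lemma' _ ((1/2) * ∑ k ∈ Finset.range L,
      (‖(-(w (k+1))) - Matrix.toEuclideanLin (W k) (-(w k))‖ ^ 2
        + β (k+1) * ‖Matrix.toEuclideanLin (W k)ᵀ (-(w (k+1))) - (-(w k))‖ ^ 2))
    intro θ h0 h1
    have hle := hzmin' (fun k => zs' k + θ • (-(w k)))
      (by show zs' 0 + θ • (-(w 0)) = x'; rw [hw0, neg_zero, smul_zero, add_zero, hz0'])
      (fun k hk1 hk2 => (feas θ h0 h1).2 k hk1 hk2)
    rw [expand zs' (fun k => -(w k)) θ] at hle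
    linarith
  -- combine the two variational inequalities
  have hcomb : 0 ≤ ∑ k ∈ Finset.range L,
      ((inner ℝ ((zs (k+1) - Matrix.toEuclideanLin (W k) (zs k) - b k)
            - (zs' (k+1) - Matrix.toEuclideanLin (W k) (zs' k) - b k))
          (w (k+1) - Matrix.toEuclideanLin (W k) (w k)) : ℝ)
       + β (k+1) * (inner ℝ ((Matrix.toEuclideanLin (W k)ᵀ (zs (k+1)) - zs k - c k)
            - (Matrix.toEuclideanLin (W k)ᵀ (zs' (k+1)) - zs' k - c k))
          (Matrix.toEuclideanLin (W k)ᵀ (w (k+1)) - w k) : ℝ)) := by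
    have heq : ∀ k ∈ Finset.range L,
        ((inner ℝ ((zs (k+1) - Matrix.toEuclideanLin (W k) (zs k) - b k)
              - (zs' (k+1) - Matrix.toEuclideanLin (W k) (zs' k) - b k))
            (w (k+1) - Matrix.toEuclideanLin (W k) (w k)) : ℝ)
         + β (k+1) * (inner ℝ ((Matrix.toEuclideanLin (W k)ᵀ (zs (k+1)) - zs k - c k)
              - (Matrix.toEuclideanLin (W k)ᵀ (zs' (k+1)) - zs' k - c k))
            (Matrix.toEuclideanLin (W k)ᵀ (w (k+1)) - w k) : ℝ))
        = ((inner ℝ (zs (k+1) - Matrix.toEuclideanLin (W k) (zs k) - b k)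
              (w (k+1) - Matrix.toEuclideanLin (W k) (w k)) : ℝ)
           + β (k+1) * (inner ℝ (Matrix.toEuclideanLin (W k)ᵀ (zs (k+1)) - zs k - c k)
              (Matrix.toEuclideanLin (W k)ᵀ (w (k+1)) - w k) : ℝ))
          + ((inner ℝ (zs' (k+1) - Matrix.toEuclideanLin (W k) (zs' k) - b k)
              ((-(w (k+1))) - Matrix.toEuclideanLin (W k) (-(w k))) : ℝ)
           + β (k+1) * (inner ℝ (Matrix.toEuclideanLin (W k)ᵀ (zs' (k+1)) - zs' k - c k)
              (Matrix.toEuclideanLin (W k)ᵀ (-(w (k+1))) - (-(w k))) : ℝ)) := by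
      intro k _
      have hn1 : (-(w (k+1))) - Matrix.toEuclideanLin (W k) (-(w k))
          = -(w (k+1) - Matrix.toEuclideanLin (W k) (w k)) := by
        rw [map_neg, neg_sub_neg, neg_sub]
      have hn2 : Matrix.toEuclideanLin (W k)ᵀ (-(w (k+1))) - (-(w k))
          = -(Matrix.toEuclideanLin (W k)ᵀ (w (k+1)) - w k) := by
        rw [map_neg, neg_sub_neg, neg_sub]
      simp only [hn1, hn2, inner_neg_right, inner_sub_left]
      ring
    rw [Finset.sum_congr rfl heq, Finset.sum_add_distrib]
    exact add_nonneg hD hD'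
  obtain ⟨m, rfl⟩ : ∃ m, L = m + 1 := ⟨L - 1, by omega⟩
  rw [Finset.sum_range_succ'] at hcomb
  simp only [Nat.zero_add] at hcomb
  -- the tail terms are nonpositive
  have haux : ∀ {n n' : ℕ} (v1 : EuclideanSpace ℝ (Fin n)) (v2 : EuclideanSpace ℝ (Fin n'))
      (bb : ℝ), 0 ≤ bb → (inner ℝ (-v1) v1 : ℝ) + bb * (inner ℝ (-v2) v2 : ℝ) ≤ 0 := by
    intro n n' v1 v2 bb hbb
    rw [inner_neg_left, inner_neg_left, real_inner_self_eq_norm_sq, real_inner_self_eq_norm_sq]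
    nlinarith [sq_nonneg ‖v1‖, sq_nonneg ‖v2‖, mul_nonneg hbb (sq_nonneg ‖v2‖)]
  have hrest : ∀ k ∈ Finset.range m,
      ((inner ℝ ((zs (k+1+1) - Matrix.toEuclideanLin (W (k+1)) (zs (k+1)) - b (k+1))
            - (zs' (k+1+1) - Matrix.toEuclideanLin (W (k+1)) (zs' (k+1)) - b (k+1)))
          (w (k+1+1) - Matrix.toEuclideanLin (W (k+1)) (w (k+1))) : ℝ)
       + β (k+1+1) * (inner ℝ ((Matrix.toEuclideanLin (W (k+1))ᵀ (zs (k+1+1)) - zs (k+1) - c (k+1))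
            - (Matrix.toEuclideanLin (W (k+1))ᵀ (zs' (k+1+1)) - zs' (k+1) - c (k+1)))
          (Matrix.toEuclideanLin (W (k+1))ᵀ (w (k+1+1)) - w (k+1)) : ℝ)) ≤ 0 := by
    intro k hk
    simp only [Finset.mem_range] at hk
    rw [hwk (k+1+1) (by omega), hwk (k+1) (by omega)]
    have e1 : (zs (k+1+1) - Matrix.toEuclideanLin (W (k+1)) (zs (k+1)) - b (k+1))
          - (zs' (k+1+1) - Matrix.toEuclideanLin (W (k+1)) (zs' (k+1)) - b (k+1))
        = -((zs' (k+1+1) - zs (k+1+1))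
            - Matrix.toEuclideanLin (W (k+1)) (zs' (k+1) - zs (k+1))) := by
      simp only [map_sub]; module
    have e2 : (Matrix.toEuclideanLin (W (k+1))ᵀ (zs (k+1+1)) - zs (k+1) - c (k+1))
          - (Matrix.toEuclideanLin (W (k+1))ᵀ (zs' (k+1+1)) - zs' (k+1) - c (k+1))
        = -(Matrix.toEuclideanLin (W (k+1))ᵀ (zs' (k+1+1) - zs (k+1+1))
            - (zs' (k+1) - zs (k+1))) := by
      simp only [map_sub]; module
    rw [e1, e2]
    exact haux _ _ _ (hβ (k+2) (by omega) (by omega))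
  have hsum0 := Finset.sum_nonpos hrest
  have hG0 : (0:ℝ) ≤
      (inner ℝ ((zs 1 - Matrix.toEuclideanLin (W 0) (zs 0) - b 0)
            - (zs' 1 - Matrix.toEuclideanLin (W 0) (zs' 0) - b 0))
          (w 1 - Matrix.toEuclideanLin (W 0) (w 0)) : ℝ)
       + β 1 * (inner ℝ ((Matrix.toEuclideanLin (W 0)ᵀ (zs 1) - zs 0 - c 0)
            - (Matrix.toEuclideanLin (W 0)ᵀ (zs' 1) - zs' 0 - c 0))
          (Matrix.toEuclideanLin (W 0)ᵀ (w 1) - w 0) : ℝ) := by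
    linarith
  rw [hwk 1 le_rfl, hw0, map_zero, sub_zero, sub_zero] at hG0
  have q1 : (zs 1 - Matrix.toEuclideanLin (W 0) (zs 0) - b 0)
        - (zs' 1 - Matrix.toEuclideanLin (W 0) (zs' 0) - b 0)
      = (zs 1 - zs' 1) - Matrix.toEuclideanLin (W 0) (x - x') := by
    rw [hz0, hz0']; simp only [map_sub]; module
  have q2 : (Matrix.toEuclideanLin (W 0)ᵀ (zs 1) - zs 0 - c 0)
        - (Matrix.toEuclideanLin (W 0)ᵀ (zs' 1) - zs' 0 - c 0)
      = Matrix.toEuclideanLin (W 0)ᵀ (zs 1 - zs' 1) - (x - x') := by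
    rw [hz0, hz0']; simp only [map_sub]; module
  have q4 : Matrix.toEuclideanLin (W 0)ᵀ (zs' 1 - zs 1)
      = -(Matrix.toEuclideanLin (W 0)ᵀ (zs 1 - zs' 1)) := by
    rw [← map_neg, neg_sub]
  have q3 : zs' 1 - zs 1 = -(zs 1 - zs' 1) := (neg_sub _ _).symm
  rw [q1, q2, q4, q3, inner_neg_right, inner_neg_right] at hG0
  have r1 : (inner ℝ ((zs 1 - zs' 1) - Matrix.toEuclideanLin (W 0) (x - x')) (zs 1 - zs' 1) : ℝ)
      = ‖zs 1 - zs' 1‖ ^ 2 - inner ℝ (Matrix.toEuclideanLin (W 0) (x - x')) (zs 1 - zs' 1) := by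
    rw [inner_sub_left, real_inner_self_eq_norm_sq]
  have r2 : (inner ℝ ((Matrix.toEuclideanLin (W 0)ᵀ (zs 1 - zs' 1)) - (x - x'))
        (Matrix.toEuclideanLin (W 0)ᵀ (zs 1 - zs' 1)) : ℝ)
      = ‖Matrix.toEuclideanLin (W 0)ᵀ (zs 1 - zs' 1)‖ ^ 2
        - inner ℝ (x - x') (Matrix.toEuclideanLin (W 0)ᵀ (zs 1 - zs' 1)) := by
    rw [inner_sub_left, real_inner_self_eq_norm_sq]
  rw [r1, r2] at hG0
  have hadj : (inner ℝ (Matrix.toEuclideanLin (W 0) (x - x')) (zs 1 - zs' 1) : ℝ)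
      = inner ℝ (x - x') (Matrix.toEuclideanLin (W 0)ᵀ (zs 1 - zs' 1)) := by
    have ht : Matrix.toEuclideanLin (W 0)ᵀ = LinearMap.adjoint (Matrix.toEuclideanLin (W 0)) := by
      rw [← Matrix.conjTranspose_eq_transpose_of_trivial,
        Matrix.toEuclideanLin_conjTranspose_eq_adjoint]
    rw [ht, LinearMap.adjoint_inner_right]
  have hCS : (inner ℝ (x - x') (Matrix.toEuclideanLin (W 0)ᵀ (zs 1 - zs' 1)) : ℝ)
      ≤ ‖x - x'‖ * ‖Matrix.toEuclideanLin (W 0)ᵀ (zs 1 - zs' 1)‖ := real_inner_le_norm _ _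
  by_cases hb : 0 < β 1
  · rw [if_pos hb]
    apply scalar_pos (β 1) _ ‖Matrix.toEuclideanLin (W 0)ᵀ (zs 1 - zs' 1)‖ _ hb
      (norm_nonneg _) (norm_nonneg _) (norm_nonneg _)
    nlinarith [mul_le_mul_of_nonneg_left hCS hb.le]
  · rw [if_neg hb]
    have hb0 : β 1 = 0 := le_antisymm (not_lt.1 hb) (hβ 1 le_rfl (by omega))
    rw [hb0] at hG0
    have hop : ‖Matrix.toEuclideanLin (W 0) (x - x')‖
        ≤ ‖LinearMap.toContinuousLinearMap (E := EuclideanSpace ℝ (Fin (d 0))) (Matrix.toEuclideanLin (W 0))‖ * ‖x - x'‖ := by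
      have h := (LinearMap.toContinuousLinearMap (E := EuclideanSpace ℝ (Fin (d 0))) (Matrix.toEuclideanLin (W 0))).le_opNorm (x - x')
      simpa using h
    have hcs2 : (inner ℝ (Matrix.toEuclideanLin (W 0) (x - x')) (zs 1 - zs' 1) : ℝ)
        ≤ ‖Matrix.toEuclideanLin (W 0) (x - x')‖ * ‖zs 1 - zs' 1‖ := real_inner_le_norm _ _
    apply scalar_zero _ _ (norm_nonneg _) (mul_nonneg (norm_nonneg _) (norm_nonneg _))
    nlinarith [mul_le_mul_of_nonneg_right hop (norm_nonneg (zs 1 - zs' 1))]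

private lemma main_aux (L : ℕ) : ∀ (d : ℕ → ℕ)
    (W : (k : ℕ) → Matrix (Fin (d (k + 1))) (Fin (d k)) ℝ)
    (b : (k : ℕ) → EuclideanSpace ℝ (Fin (d (k + 1))))
    (c : (k : ℕ) → EuclideanSpace ℝ (Fin (d k)))
    (β : ℕ → ℝ), (∀ k, 1 ≤ k → k ≤ L → 0 ≤ β k) →
    ∀ (C : (k : ℕ) → Set (EuclideanSpace ℝ (Fin (d k)))),
    (∀ k, 1 ≤ k → k ≤ L → Convex ℝ (C k)) →
    ∀ (E : ((k : ℕ) → EuclideanSpace ℝ (Fin (d k))) → ℝ),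
    (∀ z, E z = (1/2) * ∑ k ∈ Finset.range L,
        (‖z (k + 1) - Matrix.toEuclideanLin (W k) (z k) - b k‖ ^ 2
          + β (k + 1) * ‖Matrix.toEuclideanLin (W k)ᵀ (z (k + 1)) - z k - c k‖ ^ 2)) →
    ∀ (x x' : EuclideanSpace ℝ (Fin (d 0)))
    (zs zs' : (k : ℕ) → EuclideanSpace ℝ (Fin (d k))),
    (zs 0 = x ∧ (∀ k, 1 ≤ k → k ≤ L → zs k ∈ C k) ∧
      ∀ z, z 0 = x → (∀ k, 1 ≤ k → k ≤ L → z k ∈ C k) → E zs ≤ E z) →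
    (zs' 0 = x' ∧ (∀ k, 1 ≤ k → k ≤ L → zs' k ∈ C k) ∧
      ∀ z, z 0 = x' → (∀ k, 1 ≤ k → k ≤ L → z k ∈ C k) → E zs' ≤ E z) →
    ‖zs L - zs' L‖ ≤
      (∏ k ∈ Finset.Icc 1 L,
        (if 0 < β k then (Real.sqrt (β k) + 1 / Real.sqrt (β k)) / 2
         else ‖LinearMap.toContinuousLinearMap (E := EuclideanSpace ℝ (Fin (d (k - 1)))) (Matrix.toEuclideanLin (W (k - 1)))‖))
        * ‖x - x'‖ := by
  induction L with
  | zero =>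
    intro d W b c β hβ C hCcv E hE x x' zs zs' hzs hzs'
    rw [hzs.1, hzs'.1, Finset.Icc_eq_empty (by omega), Finset.prod_empty, one_mul]
  | succ m ih =>
    intro d W b c β hβ C hCcv E hE x x' zs zs' hzs hzs'
    set ρfun : ℕ → ℝ := fun k =>
      (if 0 < β k then (Real.sqrt (β k) + 1 / Real.sqrt (β k)) / 2
       else ‖LinearMap.toContinuousLinearMap (E := EuclideanSpace ℝ (Fin (d (k - 1)))) (Matrix.toEuclideanLin (W (k - 1)))‖) with hρ
    have h1 := layer1 (m+1) (Nat.succ_pos m) d W b c β hβ C hCcv E hE x x' zs zs' hzs hzs'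
    have h1' : ‖zs 1 - zs' 1‖ ≤ ρfun 1 * ‖x - x'‖ := h1
    -- tail minimality for zs
    have tailmin : ∀ (y : EuclideanSpace ℝ (Fin (d 0)))
        (u : (k : ℕ) → EuclideanSpace ℝ (Fin (d k))),
        u 0 = y → (∀ k, 1 ≤ k → k ≤ m + 1 → u k ∈ C k) →
        (∀ z, z 0 = y → (∀ k, 1 ≤ k → k ≤ m + 1 → z k ∈ C k) → E u ≤ E z) →
        ∀ z : (k : ℕ) → EuclideanSpace ℝ (Fin (d (k+1))), z 0 = u 1 →
        (∀ k, 1 ≤ k → k ≤ m → z k ∈ C (k+1)) →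
        (1/2) * ∑ k ∈ Finset.range m,
          (‖u (k+1+1) - Matrix.toEuclideanLin (W (k+1)) (u (k+1)) - b (k+1)‖ ^ 2
            + β (k+1+1) * ‖Matrix.toEuclideanLin (W (k+1))ᵀ (u (k+1+1)) - u (k+1) - c (k+1)‖ ^ 2)
        ≤ (1/2) * ∑ k ∈ Finset.range m,
          (‖z (k+1) - Matrix.toEuclideanLin (W (k+1)) (z k) - b (k+1)‖ ^ 2
            + β (k+1+1) * ‖Matrix.toEuclideanLin (W (k+1))ᵀ (z (k+1)) - z k - c (k+1)‖ ^ 2) := by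
      intro y u hu0 huC humin z hz0 hzCk
      set ze : (k : ℕ) → EuclideanSpace ℝ (Fin (d k)) :=
        fun k => Nat.rec (motive := fun k => EuclideanSpace ℝ (Fin (d k))) y (fun n _ => z n) k
        with hzedef
      have hze0 : ze 0 = y := rfl
      have hzes : ∀ n, ze (n+1) = z n := fun n => rfl
      have hze1 : ze 1 = u 1 := by rw [← hz0]; rfl
      have hmem : ∀ k, 1 ≤ k → k ≤ m + 1 → ze k ∈ C k := by
        intro k hk1 hk2
        obtain ⟨n, rfl⟩ : ∃ n, k = n + 1 := ⟨k - 1, by omega⟩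
        rcases Nat.eq_zero_or_pos n with hn | hn
        · subst hn
          rw [hzes, hz0]
          exact huC 1 (by omega) (by omega)
        · rw [hzes]
          exact hzCk n (by omega) (by omega)
      have hle := humin ze hze0 hmem
      rw [hE u, hE ze, Finset.sum_range_succ', Finset.sum_range_succ'] at hle
      simp only [Nat.zero_add, zero_add, hzes, hz0, hze1, hze0, ← hu0] at hle
      linarith
    have key := ih (fun k => d (k+1)) (fun k => W (k+1)) (fun k => b (k+1)) (fun k => c (k+1))
      (fun k => β (k+1)) (fun k hk1 hk2 => hβ (k+1) (by omega) (by omega))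
      (fun k => C (k+1)) (fun k hk1 hk2 => hCcv (k+1) (by omega) (by omega))
      (fun z => (1/2) * ∑ k ∈ Finset.range m,
        (‖z (k+1) - Matrix.toEuclideanLin (W (k+1)) (z k) - b (k+1)‖ ^ 2
          + β (k+1+1) * ‖Matrix.toEuclideanLin (W (k+1))ᵀ (z (k+1)) - z k - c (k+1)‖ ^ 2))
      (fun z => rfl)
      (zs 1) (zs' 1) (fun k => zs (k+1)) (fun k => zs' (k+1))
      ⟨rfl, fun k hk1 hk2 => hzs.2.1 (k+1) (by omega) (by omega),
        tailmin x zs hzs.1 hzs.2.1 hzs.2.2⟩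
      ⟨rfl, fun k hk1 hk2 => hzs'.2.1 (k+1) (by omega) (by omega),
        tailmin x' zs' hzs'.1 hzs'.2.1 hzs'.2.2⟩
    have key2 : ‖zs (m+1) - zs' (m+1)‖ ≤
        (∏ k ∈ Finset.Icc 1 m,
          (if 0 < β (k+1) then (Real.sqrt (β (k+1)) + 1 / Real.sqrt (β (k+1))) / 2
           else ‖LinearMap.toContinuousLinearMap (E := EuclideanSpace ℝ (Fin (d (k - 1 + 1)))) (Matrix.toEuclideanLin (W (k - 1 + 1)))‖))
          * ‖zs 1 - zs' 1‖ := key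
    have hfix : ∏ k ∈ Finset.Icc 1 m,
        (if 0 < β (k+1) then (Real.sqrt (β (k+1)) + 1 / Real.sqrt (β (k+1))) / 2
         else ‖LinearMap.toContinuousLinearMap (E := EuclideanSpace ℝ (Fin (d (k - 1 + 1)))) (Matrix.toEuclideanLin (W (k - 1 + 1)))‖)
        = ∏ k ∈ Finset.Icc 1 m, ρfun (k+1) := by
      refine Finset.prod_congr rfl (fun k hk => ?_)
      rw [Finset.mem_Icc] at hk
      have e2 := congrArg (fun n : ℕ =>
        ‖LinearMap.toContinuousLinearMap (E := EuclideanSpace ℝ (Fin (d n))) (Matrix.toEuclideanLin (W n))‖)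
        (show k - 1 + 1 = k by omega)
      have e3 := congrArg (fun n : ℕ =>
        ‖LinearMap.toContinuousLinearMap (E := EuclideanSpace ℝ (Fin (d n))) (Matrix.toEuclideanLin (W n))‖)
        (show k + 1 - 1 = k by omega)
      simp only at e2 e3
      simp only [hρ]
      rw [e2, e3]
    rw [hfix] at key2
    have hρnonneg : ∀ k, 0 ≤ ρfun k := by
      intro k
      simp only [hρ]
      split_ifs with h
      · positivity
      · exact norm_nonneg _
    have hP : 0 ≤ ∏ k ∈ Finset.Icc 1 m, ρfun (k+1) :=
      Finset.prod_nonneg (fun k _ => hρnonneg (k+1))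
    have hprod : ∏ k ∈ Finset.Icc 1 (m+1), ρfun k
        = ρfun 1 * ∏ k ∈ Finset.Icc 1 m, ρfun (k+1) := by
      rw [← Finset.Ico_add_one_right_eq_Icc, ← Finset.Ico_add_one_right_eq_Icc,
        Finset.prod_eq_prod_Ico_succ_bot (by omega : 1 < m + 1 + 1)]
      congr 1
      rw [Finset.prod_Ico_eq_prod_range, Finset.prod_Ico_eq_prod_range]
      refine Finset.prod_congr (by rw [show m + 1 + 1 - (1 + 1) = m + 1 - 1 from by omega]) ?_
      intro i _
      congr 1
      omega
    calc ‖zs (m+1) - zs' (m+1)‖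
        ≤ (∏ k ∈ Finset.Icc 1 m, ρfun (k+1)) * ‖zs 1 - zs' 1‖ := key2
      _ ≤ (∏ k ∈ Finset.Icc 1 m, ρfun (k+1)) * (ρfun 1 * ‖x - x'‖) :=
          mul_le_mul_of_nonneg_left h1' hP
      _ = (∏ k ∈ Finset.Icc 1 (m+1), ρfun k) * ‖x - x'‖ := by rw [hprod]; ring


/-- (Theorem 1 of the paper.) In an `L`-layer lifted
regression/reconstruction network with energy
`E(z; x) = (1/2) ∑_{k=0}^{L-1} (‖z_{k+1} − W_k z_k − b_k‖² + β_{k+1} ‖W_kᵀ z_{k+1} − z_k − c_k‖²)`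
(with `z₀ := x`, `z_k ∈ C_k`), and
`ρ_k = (√β_k + 1/√β_k)/2` if `β_k > 0`, `ρ_k = ‖W_{k-1}‖₂` if `β_k = 0`,
the map from the input `x` to the minimizing last-layer activations `z*_L` is
Lipschitz with constant `∏_{k=1}^{L} ρ_k`. -/
theorem stmt8 (L : ℕ) (hL : 0 < L)
    (d : ℕ → ℕ) (hd : ∀ k, k ≤ L → 0 < d k)
    (W : (k : ℕ) → Matrix (Fin (d (k + 1))) (Fin (d k)) ℝ)
    (b : (k : ℕ) → EuclideanSpace ℝ (Fin (d (k + 1))))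
    (c : (k : ℕ) → EuclideanSpace ℝ (Fin (d k)))
    (β : ℕ → ℝ) (hβ : ∀ k, 1 ≤ k → k ≤ L → 0 ≤ β k)
    (C : (k : ℕ) → Set (EuclideanSpace ℝ (Fin (d k))))
    (hCne : ∀ k, 1 ≤ k → k ≤ L → (C k).Nonempty)
    (hCcl : ∀ k, 1 ≤ k → k ≤ L → IsClosed (C k))
    (hCcv : ∀ k, 1 ≤ k → k ≤ L → Convex ℝ (C k))
    (E : ((k : ℕ) → EuclideanSpace ℝ (Fin (d k))) → ℝ)
    (hE : ∀ z, E z = (1/2) * ∑ k ∈ Finset.range L,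
        (‖z (k + 1) - Matrix.toEuclideanLin (W k) (z k) - b k‖ ^ 2
          + β (k + 1) * ‖Matrix.toEuclideanLin (W k)ᵀ (z (k + 1)) - z k - c k‖ ^ 2))
    (x x' : EuclideanSpace ℝ (Fin (d 0)))
    (zs zs' : (k : ℕ) → EuclideanSpace ℝ (Fin (d k)))
    (hzs : zs 0 = x ∧ (∀ k, 1 ≤ k → k ≤ L → zs k ∈ C k) ∧
      ∀ z, z 0 = x → (∀ k, 1 ≤ k → k ≤ L → z k ∈ C k) → E zs ≤ E z)
    (hzs' : zs' 0 = x' ∧ (∀ k, 1 ≤ k → k ≤ L → zs' k ∈ C k) ∧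
      ∀ z, z 0 = x' → (∀ k, 1 ≤ k → k ≤ L → z k ∈ C k) → E zs' ≤ E z) :
    ‖zs L - zs' L‖ ≤
      (∏ k ∈ Finset.Icc 1 L,
        (if 0 < β k then (Real.sqrt (β k) + 1 / Real.sqrt (β k)) / 2
         else ‖LinearMap.toContinuousLinearMap (E := EuclideanSpace ℝ (Fin (d (k - 1)))) (Matrix.toEuclideanLin (W (k - 1)))‖))
        * ‖x - x'‖ :=
  main_aux L d W b c β hβ C hCcv E hE x x' zs zs' hzs hzs'
end

section
/- In the L-layer lifted regression/reconstruction network with β₁ = β₂ = ··· = β_{L−1} = 1 and β_L = 0 (i.e., the output layer is a pure regression layer), the mapping from the input x to the last-layer activations z*_L(x) is Lipschitz continuous with constant at most ‖W_{L−1}‖₂: if z* minimizes E(·; x) over C₁×···×C_L and z*' minimizes E(·; x') over C₁×···×C_L, then ‖z*_L − z*'_L‖ ≤ ‖W_{L−1}‖₂·‖x − x'‖. -/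
set_option maxHeartbeats 1000000


open Matrix
open scoped RealInnerProductSpace

open Matrix
open scoped RealInnerProductSpace

lemma quad_nonneg_aux (α γ : ℝ) (h : ∀ t : ℝ, 0 < t → t ≤ 1 → 0 ≤ α * t + γ * t ^ 2) :
    0 ≤ α := by
  by_contra hα
  push_neg at hα
  rcases le_or_gt γ 0 with hγ | hγ
  · have := h 1 one_pos le_rfl; nlinarith
  · set t := min 1 (-α / (2 * γ)) with htdef
    have ht : (0:ℝ) < t := lt_min one_pos (div_pos (by linarith) (by linarith))
    have h0 := h t ht (min_le_left _ _)
    have h2 : t ≤ -α / (2 * γ) := min_le_right _ _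
    have h3 : γ * t ≤ -α / 2 := by
      have : γ * (-α / (2 * γ)) = -α / 2 := by field_simp
      nlinarith
    nlinarith [mul_le_mul_of_nonneg_right h3 ht.le]

lemma key_vi
    (L : ℕ) (d : ℕ → ℕ)
    (W : (k : ℕ) → Matrix (Fin (d (k + 1))) (Fin (d k)) ℝ)
    (b : (k : ℕ) → EuclideanSpace ℝ (Fin (d (k + 1))))
    (c : (k : ℕ) → EuclideanSpace ℝ (Fin (d k)))
    (β : ℕ → ℝ)
    (C : (k : ℕ) → Set (EuclideanSpace ℝ (Fin (d k))))
    (hCcv : ∀ k, 1 ≤ k → k ≤ L → Convex ℝ (C k))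
    (E : ((k : ℕ) → EuclideanSpace ℝ (Fin (d k))) → ℝ)
    (hE : ∀ z, E z = (1/2) * ∑ k ∈ Finset.range L,
        (‖z (k + 1) - Matrix.toEuclideanLin (W k) (z k) - b k‖ ^ 2
          + β (k + 1) * ‖Matrix.toEuclideanLin (W k)ᵀ (z (k + 1)) - z k - c k‖ ^ 2))
    (x : EuclideanSpace ℝ (Fin (d 0)))
    (zs : (k : ℕ) → EuclideanSpace ℝ (Fin (d k)))
    (h0 : zs 0 = x) (hfeas : ∀ k, 1 ≤ k → k ≤ L → zs k ∈ C k)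
    (hmin : ∀ z, z 0 = x → (∀ k, 1 ≤ k → k ≤ L → z k ∈ C k) → E zs ≤ E z)
    (m : ℕ) (hm : m + 1 ≤ L) (w : EuclideanSpace ℝ (Fin (d (m+1)))) (hw : w ∈ C (m+1)) :
    0 ≤ ⟪zs (m+1) - Matrix.toEuclideanLin (W m) (zs m) - b m, w - zs (m+1)⟫
      + β (m+1) * ⟪Matrix.toEuclideanLin (W m)ᵀ (zs (m+1)) - zs m - c m,
          Matrix.toEuclideanLin (W m)ᵀ (w - zs (m+1))⟫
      + (if m + 1 < L then
          - ⟪zs (m+1+1) - Matrix.toEuclideanLin (W (m+1)) (zs (m+1)) - b (m+1),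
              Matrix.toEuclideanLin (W (m+1)) (w - zs (m+1))⟫
          - β (m+1+1) * ⟪Matrix.toEuclideanLin (W (m+1))ᵀ (zs (m+1+1)) - zs (m+1) - c (m+1),
              w - zs (m+1)⟫
        else 0) := by
  set v := w - zs (m+1) with hv
  set A := Matrix.toEuclideanLin (W m) with hA
  set A' := Matrix.toEuclideanLin (W m)ᵀ with hA'
  set B := Matrix.toEuclideanLin (W (m+1)) with hB
  set B' := Matrix.toEuclideanLin (W (m+1))ᵀ with hB'
  set p : EuclideanSpace ℝ (Fin (d (m+1))) := zs (m+1) - A (zs m) - b m with hp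
  set r : EuclideanSpace ℝ (Fin (d m)) := A' (zs (m+1)) - zs m - c m with hr
  set p2 : EuclideanSpace ℝ (Fin (d (m+1+1))) := zs (m+1+1) - B (zs (m+1)) - b (m+1) with hp2
  set r2 : EuclideanSpace ℝ (Fin (d (m+1))) := B' (zs (m+1+1)) - zs (m+1) - c (m+1) with hr2
  apply quad_nonneg_aux _ ((1/2) * (‖v‖^2 + β (m+1) * ‖A' v‖^2)
      + (if m + 1 < L then (1/2) * (‖B v‖^2 + β (m+1+1) * ‖v‖^2) else 0))
  intro t ht ht1
  set u : (k : ℕ) → EuclideanSpace ℝ (Fin (d k)) :=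
    Function.update zs (m+1) (zs (m+1) + t • v) with hu
  have hu0 : u 0 = x := by
    rw [hu, Function.update_of_ne (by omega)]; exact h0
  have hufeas : ∀ k, 1 ≤ k → k ≤ L → u k ∈ C k := by
    intro k hk1 hkL
    rcases eq_or_ne k (m+1) with h | h
    · subst h
      rw [hu, Function.update_self]
      have : zs (m+1) + t • v = (1 - t) • zs (m+1) + t • w := by
        rw [hv]; module
      rw [this]
      exact hCcv (m+1) (by omega) hm (hfeas (m+1) (by omega) hm) hw
        (by linarith) ht.le (by ring)
    · rw [hu, Function.update_of_ne h]
      exact hfeas k hk1 hkL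
  have hle := hmin u hu0 hufeas
  have hum : u (m+1) = zs (m+1) + t • v := by rw [hu, Function.update_self]
  have hunot : ∀ j, j ≠ m + 1 → u j = zs j := by
    intro j hj; rw [hu, Function.update_of_ne hj]
  set D1 : ℝ := 2*t*⟪p, v⟫ + t^2*‖v‖^2 + β (m+1) * (2*t*⟪r, A' v⟫ + t^2*‖A' v‖^2) with hD1
  set D2 : ℝ := -(2*t*⟪p2, B v⟫) + t^2*‖B v‖^2
      + β (m+1+1) * (-(2*t*⟪r2, v⟫) + t^2*‖v‖^2) with hD2
  have hterm : ∀ j ∈ Finset.range L,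
      (‖u (j + 1) - Matrix.toEuclideanLin (W j) (u j) - b j‖ ^ 2
        + β (j + 1) * ‖Matrix.toEuclideanLin (W j)ᵀ (u (j + 1)) - u j - c j‖ ^ 2)
      = (‖zs (j + 1) - Matrix.toEuclideanLin (W j) (zs j) - b j‖ ^ 2
        + β (j + 1) * ‖Matrix.toEuclideanLin (W j)ᵀ (zs (j + 1)) - zs j - c j‖ ^ 2)
        + ((if j = m then D1 else 0) + (if j = m + 1 then D2 else 0)) := by
    intro j hj
    rcases eq_or_ne j m with h | hjm
    · rw [h, if_pos rfl, if_neg (by omega), add_zero]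
      have e1 : u (m+1) - Matrix.toEuclideanLin (W m) (u m) - b m = p + t • v := by
        rw [hum, hunot m (by omega), ← hA, hp]; abel
      have e2 : Matrix.toEuclideanLin (W m)ᵀ (u (m+1)) - u m - c m = r + t • (A' v) := by
        rw [hum, hunot m (by omega), ← hA', map_add, LinearMap.map_smul, hr]; abel
      rw [e1, e2, ← hA, ← hA', ← hp, ← hr]
      rw [norm_add_sq_real, norm_add_sq_real]
      simp only [real_inner_smul_right, norm_smul, Real.norm_eq_abs, mul_pow, sq_abs]
      rw [hD1]; ring
    rcases eq_or_ne j (m+1) with h | hjm1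
    · rw [h, if_neg (show m + 1 ≠ m by omega), if_pos rfl, zero_add]
      have e1 : u (m+1+1) - Matrix.toEuclideanLin (W (m+1)) (u (m+1)) - b (m+1)
          = p2 - t • (B v) := by
        rw [hum, hunot (m+1+1) (by omega), ← hB, map_add, LinearMap.map_smul, hp2]; abel
      have e2 : Matrix.toEuclideanLin (W (m+1))ᵀ (u (m+1+1)) - u (m+1) - c (m+1)
          = r2 - t • v := by
        rw [hum, hunot (m+1+1) (by omega), ← hB', hr2]; abel
      rw [e1, e2, ← hB, ← hB', ← hp2, ← hr2]
      rw [sub_eq_add_neg p2, sub_eq_add_neg r2, norm_add_sq_real, norm_add_sq_real]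
      simp only [inner_neg_right, real_inner_smul_right, norm_neg, norm_smul,
        Real.norm_eq_abs, mul_pow, sq_abs]
      rw [hD2]; ring
    · rw [if_neg hjm, if_neg hjm1, hunot j hjm1, hunot (j+1) (by omega)]
      ring
  have hsum : E u = E zs + (1/2) * (D1 + (if m + 1 < L then D2 else 0)) := by
    rw [hE u, hE zs, Finset.sum_congr rfl hterm, Finset.sum_add_distrib,
      Finset.sum_add_distrib, Finset.sum_add_distrib,
      Finset.sum_ite_eq' (Finset.range L) m,
      Finset.sum_ite_eq' (Finset.range L) (m+1)]
    simp only [Finset.mem_range]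
    rw [if_pos (show m < L by omega)]
    ring
  rw [hsum] at hle
  have hkey : 0 ≤ (1/2) * (D1 + (if m + 1 < L then D2 else 0)) := by linarith
  by_cases hlt : m + 1 < L
  · simp only [if_pos hlt] at hkey ⊢
    have heq : (1/2) * (D1 + D2) =
        (⟪p, v⟫ + β (m+1) * ⟪r, A' v⟫ + (- ⟪p2, B v⟫ - β (m+1+1) * ⟪r2, v⟫)) * t
        + ((1/2) * (‖v‖^2 + β (m+1) * ‖A' v‖^2) + (1/2) * (‖B v‖^2 + β (m+1+1) * ‖v‖^2)) * t^2 := by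
      rw [hD1, hD2]; ring
    rw [heq] at hkey; linarith
  · simp only [if_neg hlt] at hkey ⊢
    have heq : (1/2) * (D1 + 0) =
        (⟪p, v⟫ + β (m+1) * ⟪r, A' v⟫ + 0) * t
        + ((1/2) * (‖v‖^2 + β (m+1) * ‖A' v‖^2) + 0) * t^2 := by
      rw [hD1]; ring
    rw [heq] at hkey; linarith

lemma pair_aux {n : ℕ} (u₁ u₂ w δv : EuclideanSpace ℝ (Fin n)) (h : u₂ - u₁ = -w) :
    ⟪u₁, -δv⟫ + ⟪u₂, δv⟫ = -⟪w, δv⟫ := by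
  have hu : u₂ = u₁ - w := by rw [sub_eq_add_neg u₁ w, ← h]; abel
  rw [hu, inner_sub_left, inner_neg_right]; ring

lemma adj_aux {m n : ℕ} (W : Matrix (Fin m) (Fin n) ℝ) (u : EuclideanSpace ℝ (Fin m))
    (w : EuclideanSpace ℝ (Fin n)) :
    ⟪Matrix.toEuclideanLin Wᵀ u, w⟫ = ⟪u, Matrix.toEuclideanLin W w⟫ := by
  rw [← Matrix.conjTranspose_eq_transpose_of_trivial,
    Matrix.toEuclideanLin_conjTranspose_eq_adjoint, LinearMap.adjoint_inner_left]


/-- (Corollary to Theorem 1.) In an `L`-layer lifted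
regression/reconstruction network with `β₁ = ⋯ = β_{L-1} = 1` and `β_L = 0`
(pure regression output layer), the map from the input `x` to the minimizing
last-layer activations `z*_L` is Lipschitz with constant at most `‖W_{L-1}‖₂`. -/
theorem stmt9 (L : ℕ) (hL : 0 < L)
    (d : ℕ → ℕ) (hd : ∀ k, k ≤ L → 0 < d k)
    (W : (k : ℕ) → Matrix (Fin (d (k + 1))) (Fin (d k)) ℝ)
    (b : (k : ℕ) → EuclideanSpace ℝ (Fin (d (k + 1))))
    (c : (k : ℕ) → EuclideanSpace ℝ (Fin (d k)))
    (β : ℕ → ℝ) (hβ1 : ∀ k, 1 ≤ k → k < L → β k = 1) (hβL : β L = 0)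
    (C : (k : ℕ) → Set (EuclideanSpace ℝ (Fin (d k))))
    (hCne : ∀ k, 1 ≤ k → k ≤ L → (C k).Nonempty)
    (hCcl : ∀ k, 1 ≤ k → k ≤ L → IsClosed (C k))
    (hCcv : ∀ k, 1 ≤ k → k ≤ L → Convex ℝ (C k))
    (E : ((k : ℕ) → EuclideanSpace ℝ (Fin (d k))) → ℝ)
    (hE : ∀ z, E z = (1/2) * ∑ k ∈ Finset.range L,
        (‖z (k + 1) - Matrix.toEuclideanLin (W k) (z k) - b k‖ ^ 2
          + β (k + 1) * ‖Matrix.toEuclideanLin (W k)ᵀ (z (k + 1)) - z k - c k‖ ^ 2))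
    (x x' : EuclideanSpace ℝ (Fin (d 0)))
    (zs zs' : (k : ℕ) → EuclideanSpace ℝ (Fin (d k)))
    (hzs : zs 0 = x ∧ (∀ k, 1 ≤ k → k ≤ L → zs k ∈ C k) ∧
      ∀ z, z 0 = x → (∀ k, 1 ≤ k → k ≤ L → z k ∈ C k) → E zs ≤ E z)
    (hzs' : zs' 0 = x' ∧ (∀ k, 1 ≤ k → k ≤ L → zs' k ∈ C k) ∧
      ∀ z, z 0 = x' → (∀ k, 1 ≤ k → k ≤ L → z k ∈ C k) → E zs' ≤ E z) :
    ‖zs L - zs' L‖ ≤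
      ‖LinearMap.toContinuousLinearMap (𝕜 := ℝ) (E := EuclideanSpace ℝ (Fin (d (L - 1))))
          (F' := EuclideanSpace ℝ (Fin (d (L - 1 + 1)))) (Matrix.toEuclideanLin (W (L - 1)))‖ * ‖x - x'‖ := by
  obtain ⟨hx0, hzC, hzmin⟩ := hzs
  obtain ⟨hx0', hzC', hzmin'⟩ := hzs'
  obtain ⟨n, rfl⟩ : ∃ n, L = n + 1 := ⟨L - 1, (Nat.succ_pred_eq_of_pos hL).symm⟩
  simp only [Nat.add_sub_cancel]
  set δ : (k : ℕ) → EuclideanSpace ℝ (Fin (d k)) := fun k => zs k - zs' k with hδ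
  have hδk : ∀ k, δ k = zs k - zs' k := fun _ => rfl
  -- the combined variational inequality
  have hVI : ∀ m, m + 1 ≤ n + 1 →
      ⟪δ (m+1) - Matrix.toEuclideanLin (W m) (δ m), δ (m+1)⟫
      + β (m+1) * ⟪Matrix.toEuclideanLin (W m)ᵀ (δ (m+1)) - δ m,
          Matrix.toEuclideanLin (W m)ᵀ (δ (m+1))⟫
      ≤ (if m + 1 < n + 1 then
          ⟪δ (m+1+1) - Matrix.toEuclideanLin (W (m+1)) (δ (m+1)),
              Matrix.toEuclideanLin (W (m+1)) (δ (m+1))⟫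
          + β (m+1+1) * ⟪Matrix.toEuclideanLin (W (m+1))ᵀ (δ (m+1+1)) - δ (m+1), δ (m+1)⟫
        else 0) := by
    intro m hm
    have h1 := key_vi (n+1) d W b c β C hCcv E hE x zs hx0 hzC hzmin m hm
      (zs' (m+1)) (hzC' (m+1) (by omega) hm)
    have h2 := key_vi (n+1) d W b c β C hCcv E hE x' zs' hx0' hzC' hzmin' m hm
      (zs (m+1)) (hzC (m+1) (by omega) hm)
    have e0 : zs' (m+1) - zs (m+1) = -(δ (m+1)) := by rw [hδk (m+1)]; abel
    rw [e0] at h1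
    rw [show zs (m+1) - zs' (m+1) = δ (m+1) from (hδk (m+1)).symm] at h2
    simp only [map_neg] at h1
    have q1 : ⟪zs (m+1) - Matrix.toEuclideanLin (W m) (zs m) - b m, -(δ (m+1))⟫
        + ⟪zs' (m+1) - Matrix.toEuclideanLin (W m) (zs' m) - b m, δ (m+1)⟫
        = -⟪δ (m+1) - Matrix.toEuclideanLin (W m) (δ m), δ (m+1)⟫ :=
      pair_aux _ _ _ _ (by rw [hδk (m+1), hδk m, map_sub]; abel)
    have q2 : ⟪Matrix.toEuclideanLin (W m)ᵀ (zs (m+1)) - zs m - c m,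
          -(Matrix.toEuclideanLin (W m)ᵀ (δ (m+1)))⟫
        + ⟪Matrix.toEuclideanLin (W m)ᵀ (zs' (m+1)) - zs' m - c m,
          Matrix.toEuclideanLin (W m)ᵀ (δ (m+1))⟫
        = -⟪Matrix.toEuclideanLin (W m)ᵀ (δ (m+1)) - δ m,
          Matrix.toEuclideanLin (W m)ᵀ (δ (m+1))⟫ :=
      pair_aux _ _ _ _ (by rw [hδk (m+1), hδk m, map_sub]; abel)
    have q2' : β (m+1) * ⟪Matrix.toEuclideanLin (W m)ᵀ (zs (m+1)) - zs m - c m,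
          -(Matrix.toEuclideanLin (W m)ᵀ (δ (m+1)))⟫
        + β (m+1) * ⟪Matrix.toEuclideanLin (W m)ᵀ (zs' (m+1)) - zs' m - c m,
          Matrix.toEuclideanLin (W m)ᵀ (δ (m+1))⟫
        = -(β (m+1) * ⟪Matrix.toEuclideanLin (W m)ᵀ (δ (m+1)) - δ m,
          Matrix.toEuclideanLin (W m)ᵀ (δ (m+1))⟫) := by
      rw [← mul_add, q2]; ring
    by_cases hlt : m + 1 < n + 1
    · simp only [if_pos hlt] at h1 h2 ⊢
      have q3 : ⟪zs (m+1+1) - Matrix.toEuclideanLin (W (m+1)) (zs (m+1)) - b (m+1),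
            -(Matrix.toEuclideanLin (W (m+1)) (δ (m+1)))⟫
          + ⟪zs' (m+1+1) - Matrix.toEuclideanLin (W (m+1)) (zs' (m+1)) - b (m+1),
            Matrix.toEuclideanLin (W (m+1)) (δ (m+1))⟫
          = -⟪δ (m+1+1) - Matrix.toEuclideanLin (W (m+1)) (δ (m+1)),
            Matrix.toEuclideanLin (W (m+1)) (δ (m+1))⟫ :=
        pair_aux _ _ _ _ (by rw [hδk (m+1+1), hδk (m+1), map_sub]; abel)
      have q4 : ⟪Matrix.toEuclideanLin (W (m+1))ᵀ (zs (m+1+1)) - zs (m+1) - c (m+1),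
            -(δ (m+1))⟫
          + ⟪Matrix.toEuclideanLin (W (m+1))ᵀ (zs' (m+1+1)) - zs' (m+1) - c (m+1), δ (m+1)⟫
          = -⟪Matrix.toEuclideanLin (W (m+1))ᵀ (δ (m+1+1)) - δ (m+1), δ (m+1)⟫ :=
        pair_aux _ _ _ _ (by rw [hδk (m+1+1), hδk (m+1), map_sub]; abel)
      have q4' : β (m+1+1) * ⟪Matrix.toEuclideanLin (W (m+1))ᵀ (zs (m+1+1)) - zs (m+1)
            - c (m+1), -(δ (m+1))⟫
          + β (m+1+1) * ⟪Matrix.toEuclideanLin (W (m+1))ᵀ (zs' (m+1+1)) - zs' (m+1)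
            - c (m+1), δ (m+1)⟫
          = -(β (m+1+1) * ⟪Matrix.toEuclideanLin (W (m+1))ᵀ (δ (m+1+1)) - δ (m+1),
            δ (m+1)⟫) := by
        rw [← mul_add, q4]; ring
      linarith [h1, h2, q1, q2', q3, q4']
    · simp only [if_neg hlt] at h1 h2 ⊢
      linarith [h1, h2, q1, q2']
  -- step k = L : contraction through the last layer
  have hlast : ‖δ (n+1)‖^2 ≤ ⟪Matrix.toEuclideanLin (W n) (δ n), δ (n+1)⟫ := by
    have h := hVI n le_rfl
    rw [if_neg (lt_irrefl _), hβL] at h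
    simp only [inner_sub_left, real_inner_self_eq_norm_sq, zero_mul, add_zero] at h
    linarith
  -- monotone decrease of ‖δ k‖ along the chain
  have hstep : ∀ j m, m + 1 + j = n → ‖δ (m+1)‖^2 ≤ ‖δ m‖^2 := by
    intro j
    induction j with
    | zero =>
      intro m hmn
      simp only [Nat.add_zero] at hmn
      subst hmn
      have h := hVI m (by omega)
      rw [if_pos (by omega), hβ1 (m+1) (by omega) (by omega), hβL] at h
      simp only [inner_sub_left, real_inner_self_eq_norm_sq, one_mul, zero_mul, add_zero] at h
      have hadj : ⟪δ m, Matrix.toEuclideanLin (W m)ᵀ (δ (m+1))⟫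
          = ⟪Matrix.toEuclideanLin (W m) (δ m), δ (m+1)⟫ := by
        rw [real_inner_comm, adj_aux, real_inner_comm]
      have hcs1 : ⟪δ m, Matrix.toEuclideanLin (W m)ᵀ (δ (m+1))⟫
          ≤ ‖δ m‖ * ‖Matrix.toEuclideanLin (W m)ᵀ (δ (m+1))‖ := real_inner_le_norm _ _
      have hY : ⟪δ (m+1+1), Matrix.toEuclideanLin (W (m+1)) (δ (m+1))⟫
          = ⟪Matrix.toEuclideanLin (W (m+1)) (δ (m+1)), δ (m+1+1)⟫ := real_inner_comm _ _
      have hcs2 : ⟪Matrix.toEuclideanLin (W (m+1)) (δ (m+1)), δ (m+1+1)⟫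
          ≤ ‖Matrix.toEuclideanLin (W (m+1)) (δ (m+1))‖ * ‖δ (m+1+1)‖ := real_inner_le_norm _ _
      nlinarith [h, hlast, hadj, hcs1, hcs2, hY,
        sq_nonneg (‖δ m‖ - ‖Matrix.toEuclideanLin (W m)ᵀ (δ (m+1))‖),
        sq_nonneg (‖Matrix.toEuclideanLin (W (m+1)) (δ (m+1))‖ - ‖δ (m+1+1)‖)]
    | succ j ih =>
      intro m hmn
      have h := hVI m (by omega)
      rw [if_pos (by omega), hβ1 (m+1) (by omega) (by omega),
        hβ1 (m+1+1) (by omega) (by omega)] at h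
      simp only [inner_sub_left, real_inner_self_eq_norm_sq, one_mul] at h
      have hadj : ⟪δ m, Matrix.toEuclideanLin (W m)ᵀ (δ (m+1))⟫
          = ⟪Matrix.toEuclideanLin (W m) (δ m), δ (m+1)⟫ := by
        rw [real_inner_comm, adj_aux, real_inner_comm]
      have hcs1 : ⟪δ m, Matrix.toEuclideanLin (W m)ᵀ (δ (m+1))⟫
          ≤ ‖δ m‖ * ‖Matrix.toEuclideanLin (W m)ᵀ (δ (m+1))‖ := real_inner_le_norm _ _
      have hadj2 : ⟪Matrix.toEuclideanLin (W (m+1))ᵀ (δ (m+1+1)), δ (m+1)⟫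
          = ⟪δ (m+1+1), Matrix.toEuclideanLin (W (m+1)) (δ (m+1))⟫ := adj_aux _ _ _
      have hcs2 : ⟪δ (m+1+1), Matrix.toEuclideanLin (W (m+1)) (δ (m+1))⟫
          ≤ ‖δ (m+1+1)‖ * ‖Matrix.toEuclideanLin (W (m+1)) (δ (m+1))‖ := real_inner_le_norm _ _
      have hih : ‖δ (m+1+1)‖^2 ≤ ‖δ (m+1)‖^2 := ih (m+1) (by omega)
      nlinarith [h, hadj, hcs1, hadj2, hcs2, hih,
        sq_nonneg (‖δ m‖ - ‖Matrix.toEuclideanLin (W m)ᵀ (δ (m+1))‖),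
        sq_nonneg (‖δ (m+1+1)‖ - ‖Matrix.toEuclideanLin (W (m+1)) (δ (m+1))‖)]
  have hchain : ∀ m, m ≤ n → ‖δ m‖^2 ≤ ‖δ 0‖^2 := by
    intro m
    induction m with
    | zero => intro _; exact le_rfl
    | succ m ih =>
      intro hm
      have h1 := hstep (n - (m+1)) m (by omega)
      have h2 := ih (by omega)
      linarith
  -- final assembly
  have hδ0 : ‖δ 0‖ = ‖x - x'‖ := by rw [hδk 0, hx0, hx0']
  have hδn : ‖δ n‖ ≤ ‖x - x'‖ := by
    rw [← hδ0]
    have := hchain n le_rfl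
    nlinarith [norm_nonneg (δ n), norm_nonneg (δ 0)]
  have hop : ‖Matrix.toEuclideanLin (W n) (δ n)‖
      ≤ ‖LinearMap.toContinuousLinearMap (Matrix.toEuclideanLin (W n))‖ * ‖δ n‖ := by
    have h := (LinearMap.toContinuousLinearMap (Matrix.toEuclideanLin (W n))).le_opNorm (δ n)
    simpa using h
  have hcs : ⟪Matrix.toEuclideanLin (W n) (δ n), δ (n+1)⟫
      ≤ ‖Matrix.toEuclideanLin (W n) (δ n)‖ * ‖δ (n+1)‖ := real_inner_le_norm _ _
  have hKnn : (0:ℝ) ≤ ‖LinearMap.toContinuousLinearMap (Matrix.toEuclideanLin (W n))‖ * ‖x - x'‖ :=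
    mul_nonneg (norm_nonneg _) (norm_nonneg _)
  have h6 : ‖δ (n+1)‖^2
      ≤ (‖LinearMap.toContinuousLinearMap (Matrix.toEuclideanLin (W n))‖ * ‖x - x'‖) * ‖δ (n+1)‖ := by
    calc ‖δ (n+1)‖^2 ≤ ⟪Matrix.toEuclideanLin (W n) (δ n), δ (n+1)⟫ := hlast
      _ ≤ ‖Matrix.toEuclideanLin (W n) (δ n)‖ * ‖δ (n+1)‖ := hcs
      _ ≤ (‖LinearMap.toContinuousLinearMap (Matrix.toEuclideanLin (W n))‖ * ‖δ n‖) * ‖δ (n+1)‖ :=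
          mul_le_mul_of_nonneg_right hop (norm_nonneg _)
      _ ≤ (‖LinearMap.toContinuousLinearMap (Matrix.toEuclideanLin (W n))‖ * ‖x - x'‖) * ‖δ (n+1)‖ := by
          apply mul_le_mul_of_nonneg_right _ (norm_nonneg _)
          exact mul_le_mul_of_nonneg_left hδn (norm_nonneg _)
  rcases eq_or_lt_of_le (norm_nonneg (δ (n+1))) with h | h
  · rw [← h]; exact hKnn
  · have h7 : ‖δ (n+1)‖ * ‖δ (n+1)‖
        ≤ (‖LinearMap.toContinuousLinearMap (Matrix.toEuclideanLin (W n))‖ * ‖x - x'‖) * ‖δ (n+1)‖ := by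
      nlinarith [h6]
    exact le_of_mul_le_mul_right h7 h
end

section
/- Let f : ℝ^m → ℝ^C be Lipschitz continuous with constant ρ > 0 (Euclidean norms on domain and codomain), let x ∈ ℝ^m, and let j be an index such that the classification margin m_x = f_j(x) − max_{j' ≠ j} f_{j'}(x) is positive. Then for every perturbation δ ∈ ℝ^m with ‖δ‖ < m_x/(√2·ρ), the predicted class is unchanged: f_j(x + δ) > f_{j'}(x + δ) for all j' ≠ j. -/
/-- (Safe-perturbation radius from the classification margin.)
If `f : ℝᵐ → ℝ^C` is `ρ`-Lipschitz, the label `j` strictly maximizes `f x`, and the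
margin `m_x = f x j − max_{j' ≠ j} f x j'` is positive, then every perturbation `δ`
with `‖δ‖ < m_x/(√2 ρ)` leaves the predicted class unchanged. -/
theorem stmt10 {m C : ℕ} (hC : 2 ≤ C) (ρ : ℝ) (hρ : 0 < ρ)
    (f : EuclideanSpace ℝ (Fin m) → EuclideanSpace ℝ (Fin C))
    (hf : ∀ x y, ‖f x - f y‖ ≤ ρ * ‖x - y‖)
    (x : EuclideanSpace ℝ (Fin m)) (j : Fin C)
    (hjmax : ∀ j' : Fin C, j' ≠ j → f x j' < f x j)
    (mx : ℝ) (hmx : mx = f x j - ⨆ j' : {j' : Fin C // j' ≠ j}, f x (j' : Fin C))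
    (hmxpos : 0 < mx) :
    ∀ δ : EuclideanSpace ℝ (Fin m), ‖δ‖ < mx / (Real.sqrt 2 * ρ) →
      ∀ j' : Fin C, j' ≠ j → f (x + δ) j' < f (x + δ) j := by
  intro δ hδ j' hj'
  have hsup : f x j' ≤ ⨆ k : {k : Fin C // k ≠ j}, f x (k : Fin C) :=
    le_ciSup (f := fun k : {k : Fin C // k ≠ j} => f x (k : Fin C)) (Finite.bddAbove_range _) ⟨j', hj'⟩
  have hmargin : f x j' ≤ f x j - mx := by rw [hmx]; linarith
  set v := f (x + δ) - f x with hv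
  have hvj : v j = f (x + δ) j - f x j := rfl
  have hvj' : v j' = f (x + δ) j' - f x j' := rfl
  have hnorm : ‖v‖ ≤ ρ * ‖δ‖ := by simpa using hf (x + δ) x
  have hsum : ‖v j‖ ^ 2 + ‖v j'‖ ^ 2 ≤ ‖v‖ ^ 2 := by
    rw [EuclideanSpace.norm_eq, Real.sq_sqrt (by positivity)]
    have h := Finset.sum_le_sum_of_subset_of_nonneg (f := fun i => ‖v i‖ ^ 2)
      (Finset.subset_univ ({j, j'} : Finset (Fin C)))
      (fun i _ _ => sq_nonneg _)
    rwa [Finset.sum_pair (Ne.symm hj')] at h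
  have hsqrt2 : Real.sqrt 2 * Real.sqrt 2 = 2 := Real.mul_self_sqrt (by norm_num)
  have hs2 : 0 < Real.sqrt 2 := by positivity
  have h2 : |v j| + |v j'| ≤ Real.sqrt 2 * (ρ * ‖δ‖) := by
    rw [Real.norm_eq_abs, Real.norm_eq_abs] at hsum
    have hn0 : (0:ℝ) ≤ ρ * ‖δ‖ := by positivity
    have h1 : (|v j| + |v j'|) ^ 2 ≤ (Real.sqrt 2 * (ρ * ‖δ‖)) ^ 2 := by
      nlinarith [sq_nonneg (|v j| - |v j'|), mul_self_le_mul_self (norm_nonneg v) hnorm]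
    have h2 := Real.sqrt_le_sqrt h1
    rwa [Real.sqrt_sq (by positivity), Real.sqrt_sq (by positivity)] at h2
  have hδ' : Real.sqrt 2 * (ρ * ‖δ‖) < mx := by
    have := (lt_div_iff₀ (by positivity : 0 < Real.sqrt 2 * ρ)).mp hδ
    nlinarith
  have b1 := le_abs_self (v j')
  have b2 := neg_abs_le (v j)
  linarith
end

section
/- Let W be a real n×m matrix and let G : ℝ^n → ℝ be a continuous convex function that is coercive, i.e., G(z) → ∞ as ‖z‖ → ∞. Then the free-energy function E(x) = inf_{z ∈ ℝ^n} [ (1/2)‖z − Wx‖² + (1/2)‖Wᵀz − x‖² + G(z) ] is coercive: E(x) → ∞ as ‖x‖ → ∞. -/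
open Matrix Filter

private lemma coer_ex {E : Type*} [NormedAddCommGroup E] (G : E → ℝ)
    (h : Filter.Tendsto G (Filter.comap norm Filter.atTop) Filter.atTop) (M : ℝ) :
    ∃ R : ℝ, ∀ z : E, R ≤ ‖z‖ → M ≤ G z := by
  have h1 := h.eventually (eventually_ge_atTop M)
  rw [Filter.eventually_comap] at h1
  obtain ⟨R, hR⟩ := eventually_atTop.1 h1
  exact ⟨R, fun z hz => hR ‖z‖ hz z rfl⟩

/-- If `G` is continuous, convex and coercive
(`G z → ∞` as `‖z‖ → ∞`), then the free-energy function
`E(x) = inf_z [(1/2)‖z − Wx‖² + (1/2)‖Wᵀz − x‖² + G(z)]` is coercive: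
`E x → ∞` as `‖x‖ → ∞`. -/
theorem stmt12 {n m : ℕ}
    (W : Matrix (Fin n) (Fin m) ℝ)
    (G : EuclideanSpace ℝ (Fin n) → ℝ)
    (hGcont : Continuous G) (hGconv : ConvexOn ℝ Set.univ G)
    (hGcoer : Filter.Tendsto G (Filter.comap norm Filter.atTop) Filter.atTop) :
    Filter.Tendsto
      (fun x : EuclideanSpace ℝ (Fin m) =>
        sInf (Set.range (fun z : EuclideanSpace ℝ (Fin n) =>
          (1/2) * ‖z - Matrix.toEuclideanLin W x‖ ^ 2
            + (1/2) * ‖Matrix.toEuclideanLin Wᵀ z - x‖ ^ 2 + G z)))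
      (Filter.comap norm Filter.atTop) Filter.atTop := by
  classical
  set L : EuclideanSpace ℝ (Fin n) →L[ℝ] EuclideanSpace ℝ (Fin m) :=
    LinearMap.toContinuousLinearMap (Matrix.toEuclideanLin Wᵀ) with hL
  have hLapp : ∀ z, Matrix.toEuclideanLin Wᵀ z = L z := fun z => rfl
  set K : ℝ := ‖L‖ with hK
  have hK0 : 0 ≤ K := norm_nonneg _
  -- lower bound c for G
  obtain ⟨R0, hR0⟩ := coer_ex G hGcoer 0
  set R0' : ℝ := max R0 0 with hR0'
  have hball : (Metric.closedBall (0 : EuclideanSpace ℝ (Fin n)) R0').Nonempty :=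
    ⟨0, by simp [hR0', le_max_right]⟩
  obtain ⟨z₀, _, hz₀⟩ := (isCompact_closedBall (0 : EuclideanSpace ℝ (Fin n)) R0').exists_isMinOn
    hball hGcont.continuousOn
  set c : ℝ := min (G z₀) 0 with hc
  have hGbd : ∀ z, c ≤ G z := by
    intro z
    by_cases hz : ‖z‖ ≤ R0'
    · exact le_trans (min_le_left _ _)
        (hz₀ (by simpa [Metric.mem_closedBall, dist_zero_right] using hz))
    · push_neg at hz
      exact le_trans (min_le_right _ _)
        (hR0 z (le_trans (le_max_left _ _) hz.le))
  -- main
  rw [tendsto_atTop]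
  intro M
  obtain ⟨R1, hR1⟩ := coer_ex G hGcoer M
  set R1' : ℝ := max R1 0 with hR1'
  set s : ℝ := Real.sqrt (2 * max (M - c) 0) with hs
  have hs0 : 0 ≤ s := Real.sqrt_nonneg _
  have hs2 : s ^ 2 = 2 * max (M - c) 0 := Real.sq_sqrt (by positivity)
  rw [Filter.eventually_comap]
  filter_upwards [eventually_ge_atTop (K * R1' + s)] with b hb x hx
  -- for every z the integrand is ≥ M
  apply le_csInf (Set.range_nonempty _)
  rintro y ⟨z, rfl⟩
  by_cases hz : R1' ≤ ‖z‖
  · have h1 : (0:ℝ) ≤ (1/2) * ‖z - Matrix.toEuclideanLin W x‖ ^ 2 := by positivity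
    have h2 : (0:ℝ) ≤ (1/2) * ‖Matrix.toEuclideanLin Wᵀ z - x‖ ^ 2 := by positivity
    have h3 := hR1 z (le_trans (le_max_left _ _) hz)
    linarith
  · push_neg at hz
    have hLz : ‖L z‖ ≤ K * R1' := by
      calc ‖L z‖ ≤ K * ‖z‖ := L.le_opNorm z
        _ ≤ K * R1' := by nlinarith [norm_nonneg z]
    have hxb : K * R1' + s ≤ ‖x‖ := hx ▸ hb
    have hdist : s ≤ ‖Matrix.toEuclideanLin Wᵀ z - x‖ := by
      rw [hLapp]
      have : ‖x‖ - ‖L z‖ ≤ ‖L z - x‖ := by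
        have := norm_sub_norm_le x (L z)
        rw [norm_sub_rev] at this
        linarith [abs_le.1 (abs_norm_sub_norm_le x (L z))]
      linarith
    have hsq : s ^ 2 ≤ ‖Matrix.toEuclideanLin Wᵀ z - x‖ ^ 2 :=
      pow_le_pow_left₀ hs0 hdist 2
    have h1 : (0:ℝ) ≤ (1/2) * ‖z - Matrix.toEuclideanLin W x‖ ^ 2 := by positivity
    have h3 := hGbd z
    have h4 : M - c ≤ max (M - c) 0 := le_max_left _ _
    linarith
end

section
/- Let β > 0 and let W be a real n×m matrix. Let λ₁, …, λ_n ≥ 0 denote the eigenvalues of the symmetric positive semidefinite matrix W·Wᵀ (so that σ_i = √λ_i are the singular values of W). Then the ℓ2 operator norm of A_β = (1+β)·(I + β·W·Wᵀ)⁻¹·W equals max_i (1+β)·√λ_i / (1 + β·λ_i). -/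
open Matrix Polynomial
open scoped Matrix.Norms.L2Operator
set_option maxHeartbeats 1000000

lemma aux_l2_diag {k : ℕ} (hk : 0 < k) (d : Fin k → ℝ) :
    ‖(Matrix.diagonal d : Matrix (Fin k) (Fin k) ℝ)‖
      = Finset.univ.sup' ⟨⟨0, hk⟩, Finset.mem_univ _⟩ (fun i => |d i|) := by
  have hne : (Finset.univ : Finset (Fin k)).Nonempty := ⟨⟨0, hk⟩, Finset.mem_univ _⟩
  set M := Finset.univ.sup' hne (fun i => |d i|) with hM
  have hMle : ∀ i, |d i| ≤ M := fun i =>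
    Finset.le_sup' (f := fun i => |d i|) (Finset.mem_univ i)
  have hM0 : 0 ≤ M := le_trans (abs_nonneg _) (hMle ⟨0, hk⟩)
  have happ : ∀ (x : EuclideanSpace ℝ (Fin k)) (i : Fin k),
      (LinearMap.toContinuousLinearMap (Matrix.toEuclideanLin (Matrix.diagonal d)) x) i
        = d i * x i := by
    intro x i
    exact Matrix.mulVec_diagonal d x i
  rw [Matrix.l2_opNorm_def]
  apply le_antisymm
  · apply ContinuousLinearMap.opNorm_le_bound _ hM0
    intro x
    rw [EuclideanSpace.norm_eq, EuclideanSpace.norm_eq]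
    rw [← Real.sqrt_sq hM0, ← Real.sqrt_mul (sq_nonneg M)]
    apply Real.sqrt_le_sqrt
    rw [Finset.mul_sum]
    apply Finset.sum_le_sum
    intro i _
    have h2 := happ x i
    simp only [LinearEquiv.trans_apply] at h2 ⊢
    rw [h2]
    have h3 : ‖d i * x i‖ ^ 2 = (d i)^2 * ‖x i‖^2 := by
      rw [norm_mul, mul_pow, Real.norm_eq_abs, sq_abs]
    rw [h3]
    have h4 : (d i)^2 ≤ M^2 := by
      rw [← sq_abs]; exact pow_le_pow_left₀ (abs_nonneg _) (hMle i) 2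
    nlinarith [sq_nonneg (‖x i‖)]
  · apply Finset.sup'_le
    intro i _
    have hle := (LinearMap.toContinuousLinearMap (Matrix.toEuclideanLin
      (Matrix.diagonal d))).le_opNorm (EuclideanSpace.single i (1:ℝ))
    rw [EuclideanSpace.norm_single] at hle
    simp only [norm_one, mul_one] at hle
    refine le_trans ?_ hle
    rw [EuclideanSpace.norm_eq]
    calc |d i| = Real.sqrt ((d i)^2) := by rw [Real.sqrt_sq_eq_abs]
    _ ≤ _ := by
        apply Real.sqrt_le_sqrt
        have h5 : ‖(LinearMap.toContinuousLinearMap (Matrix.toEuclideanLin (Matrix.diagonal d))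
            (EuclideanSpace.single i 1)) i‖^2 = (d i)^2 := by
          rw [happ]; simp [EuclideanSpace.single_apply, sq_abs]
        rw [← h5]
        exact Finset.single_le_sum
          (f := fun j => ‖(LinearMap.toContinuousLinearMap (Matrix.toEuclideanLin
            (Matrix.diagonal d)) (EuclideanSpace.single i 1)) j‖^2)
          (fun j _ => sq_nonneg _) (Finset.mem_univ i)

lemma aux_charpoly_similar {k : ℕ} (P Q A : Matrix (Fin k) (Fin k) ℝ)
    (hPQ : P * Q = 1) (hQP : Q * P = 1) : (P * A * Q).charpoly = A.charpoly := by
  have hmap : ∀ (M N : Matrix (Fin k) (Fin k) ℝ),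
      (M * N).map (C : ℝ →+* ℝ[X]) = M.map C * N.map C := fun M N =>
    Matrix.map_mul
  have key : charmatrix (P * A * Q) = P.map C * charmatrix A * Q.map C := by
    unfold charmatrix
    simp only [RingHom.mapMatrix_apply]
    rw [mul_sub, sub_mul]
    congr 1
    · rw [← (Matrix.scalar_commute (X : ℝ[X]) (fun r => Commute.all _ _) (P.map C)).eq,
        mul_assoc, ← hmap, hPQ]
      simp
    · rw [← hmap, ← hmap]
  unfold Matrix.charpoly
  rw [key, det_mul, det_mul, mul_comm, ← mul_assoc, ← det_mul, ← hmap, hQP]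
  simp

lemma aux_charpoly_diagonal {k : ℕ} (d : Fin k → ℝ) :
    (Matrix.diagonal d).charpoly = ∏ i, (X - C (d i)) := by
  unfold Matrix.charpoly
  have : charmatrix (Matrix.diagonal d) = Matrix.diagonal (fun i => X - C (d i)) := by
    ext i j
    by_cases h : i = j
    · subst h; simp [charmatrix_apply]
    · simp [charmatrix_apply, Matrix.diagonal_apply_ne _ h]
  rw [this, det_diagonal]

lemma aux_ms {k : ℕ} (a b : Fin k → ℝ)
    (h : ∏ i, (X - C (a i)) = ∏ i, (X - C (b i))) :
    Multiset.map a Finset.univ.val = Multiset.map b Finset.univ.val := by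
  have h2 : (Multiset.map (fun x => X - C x) (Multiset.map a Finset.univ.val)).prod
      = (Multiset.map (fun x => X - C x) (Multiset.map b Finset.univ.val)).prod := by
    rw [Multiset.map_map, Multiset.map_map]
    exact h
  have := congrArg Polynomial.roots h2
  rwa [Polynomial.roots_multiset_prod_X_sub_C, Polynomial.roots_multiset_prod_X_sub_C] at this

lemma aux_sup'_congr {k : ℕ} (hk : 0 < k) (a b : Fin k → ℝ) (g : ℝ → ℝ)
    (h : Multiset.map a Finset.univ.val = Multiset.map b Finset.univ.val) :
    Finset.univ.sup' ⟨⟨0, hk⟩, Finset.mem_univ _⟩ (fun i => g (a i))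
      = Finset.univ.sup' ⟨⟨0, hk⟩, Finset.mem_univ _⟩ (fun i => g (b i)) := by
  have key : ∀ (u v : Fin k → ℝ),
      Multiset.map u Finset.univ.val = Multiset.map v Finset.univ.val →
      Finset.univ.sup' ⟨⟨0, hk⟩, Finset.mem_univ _⟩ (fun i => g (u i))
        ≤ Finset.univ.sup' ⟨⟨0, hk⟩, Finset.mem_univ _⟩ (fun i => g (v i)) := by
    intro u v huv
    apply Finset.sup'_le
    intro i _
    have : u i ∈ Multiset.map v Finset.univ.val := by
      rw [← huv]
      exact Multiset.mem_map_of_mem u (Finset.mem_univ i)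
    obtain ⟨j, _, hj⟩ := Multiset.mem_map.mp this
    rw [← hj]
    exact Finset.le_sup' (f := fun i => g (v i)) (Finset.mem_univ j)
  exact le_antisymm (key a b h) (key b a h.symm)

/-- (Remark 1 of the paper.) Let `β > 0` and let
`λ₁, …, λ_n ≥ 0` be the eigenvalues (with multiplicity) of the positive
semidefinite matrix `W Wᵀ`, encoded by the factorization of its characteristic
polynomial. Then the Euclidean operator norm of `A_β = (1+β)(I + β W Wᵀ)⁻¹ W`
equals `max_i (1+β)√λ_i/(1 + β λ_i)`. -/
theorem stmt14 {n m : ℕ} (hn : 0 < n) (β : ℝ) (hβ : 0 < β)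
    (W : Matrix (Fin n) (Fin m) ℝ)
    (lam : Fin n → ℝ) (hlam0 : ∀ i, 0 ≤ lam i)
    (hlam : (W * Wᵀ).charpoly = ∏ i : Fin n, (X - Polynomial.C (lam i))) :
    ‖LinearMap.toContinuousLinearMap
        (Matrix.toEuclideanLin ((1 + β) • (((1 : Matrix (Fin n) (Fin n) ℝ) + β • (W * Wᵀ))⁻¹ * W)))‖
      = Finset.univ.sup' ⟨⟨0, hn⟩, Finset.mem_univ _⟩
          (fun i : Fin n => (1 + β) * Real.sqrt (lam i) / (1 + β * lam i)) := by
  classical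
  have hconj : Wᴴ = Wᵀ := by
    ext i j; simp [Matrix.conjTranspose_apply]
  set S : Matrix (Fin n) (Fin n) ℝ := W * Wᵀ with hSdef
  have hPSD : S.PosSemidef := by
    rw [hSdef, ← hconj]; exact Matrix.posSemidef_self_mul_conjTranspose W
  have hH : S.IsHermitian := hPSD.1
  set μ : Fin n → ℝ := hH.eigenvalues with hμdef
  have hμ0 : ∀ i, 0 ≤ μ i := hPSD.eigenvalues_nonneg
  set U : Matrix (Fin n) (Fin n) ℝ := (hH.eigenvectorUnitary : Matrix (Fin n) (Fin n) ℝ)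
    with hUdef
  have hU1 : U * star U = 1 := Unitary.coe_mul_star_self hH.eigenvectorUnitary
  have hU2 : star U * U = 1 := Unitary.coe_star_mul_self hH.eigenvectorUnitary
  have hspec : S = U * Matrix.diagonal μ * star U := by
    have := hH.spectral_theorem
    simpa using this
  -- characteristic polynomial of S via spectral theorem
  have hcharS : S.charpoly = ∏ i, (X - C (μ i)) := by
    rw [hspec, aux_charpoly_similar U (star U) _ hU1 hU2, aux_charpoly_diagonal]
  have hms : Multiset.map lam Finset.univ.val = Multiset.map μ Finset.univ.val :=
    aux_ms lam μ (hlam.symm.trans hcharS)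
  -- the matrix B and its inverse
  have hd0 : ∀ i, 0 < 1 + β * μ i := fun i => by nlinarith [hμ0 i]
  set B : Matrix (Fin n) (Fin n) ℝ := 1 + β • S with hBdef
  set E : Matrix (Fin n) (Fin n) ℝ :=
    U * Matrix.diagonal (fun i => (1 + β * μ i)⁻¹) * star U with hEdef
  have hBE : B = U * Matrix.diagonal (fun i => 1 + β * μ i) * star U := by
    have : Matrix.diagonal (fun i => 1 + β * μ i)
        = 1 + β • Matrix.diagonal μ := by
      ext i j
      rcases eq_or_ne i j with h | h
      · subst h; simp [Matrix.diagonal_apply_eq, Matrix.one_apply_eq]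
      · simp [Matrix.diagonal_apply_ne _ h, Matrix.one_apply_ne h]
    rw [hBdef, this, Matrix.mul_add, Matrix.add_mul, mul_one, hU1,
      Matrix.mul_smul, Matrix.smul_mul, ← hspec]
  have hBinv : B⁻¹ = E := by
    apply Matrix.inv_eq_right_inv
    rw [hBE, hEdef]
    calc U * Matrix.diagonal (fun i => 1 + β * μ i) * star U *
          (U * Matrix.diagonal (fun i => (1 + β * μ i)⁻¹) * star U)
        = U * (Matrix.diagonal (fun i => 1 + β * μ i) * ((star U * U) *
            Matrix.diagonal (fun i => (1 + β * μ i)⁻¹))) * star U := by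
          simp only [mul_assoc]
      _ = 1 := by
          rw [hU2, one_mul, Matrix.diagonal_mul_diagonal]
          have : (fun i => (1 + β * μ i) * (1 + β * μ i)⁻¹) = fun _ => (1:ℝ) := by
            funext i; exact mul_inv_cancel₀ (hd0 i).ne'
          rw [this, Matrix.diagonal_one, mul_one, hU1]
  -- the matrix A and its conjugate transpose
  set A : Matrix (Fin n) (Fin m) ℝ := (1 + β) • (B⁻¹ * W) with hAdef
  have hEH : Eᴴ = E := by
    rw [hEdef]
    simp [Matrix.conjTranspose_mul, Matrix.star_eq_conjTranspose,
      Matrix.diagonal_conjTranspose, mul_assoc]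
  have hAH : Aᴴ = (1 + β) • (Wᵀ * E) := by
    rw [hAdef, Matrix.conjTranspose_smul, Matrix.conjTranspose_mul, hBinv, hEH, hconj,
      star_trivial]
  -- compute A * Aᴴ
  have hcol : ∀ (M : Matrix (Fin n) (Fin n) ℝ), star U * (U * M) = M := fun M => by
    rw [← mul_assoc, hU2, one_mul]
  have hDD : ∀ (a b : Fin n → ℝ) (M : Matrix (Fin n) (Fin n) ℝ),
      Matrix.diagonal a * (Matrix.diagonal b * M) = Matrix.diagonal (fun i => a i * b i) * M :=
    fun a b M => by rw [← mul_assoc, Matrix.diagonal_mul_diagonal]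
  set g : Fin n → ℝ := fun i => ((1+β)*(1+β)) * ((1 + β * μ i)⁻¹ * (μ i * (1 + β * μ i)⁻¹))
    with hgdef
  have hAA : A * Aᴴ = U * (Matrix.diagonal g * star U) := by
    rw [hAH, hAdef, hBinv, Matrix.smul_mul, Matrix.mul_smul, smul_smul]
    have hESE : E * (W * (Wᵀ * E)) = U * (Matrix.diagonal
        (fun i => (1 + β * μ i)⁻¹ * (μ i * (1 + β * μ i)⁻¹)) * star U) := by
      have hWWt : W * (Wᵀ * E) = S * E := by
        conv_lhs => rw [← Matrix.mul_assoc]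
      rw [hWWt, hspec, hEdef]
      simp only [mul_assoc, hcol, hDD]
    rw [Matrix.mul_assoc, hESE, ← Matrix.mul_smul, ← Matrix.smul_mul]
    congr 1
    rw [← Matrix.diagonal_smul]
    have hfun : (((1+β)*(1+β)) • fun i => (1 + β * μ i)⁻¹ * (μ i * (1 + β * μ i)⁻¹)) = g := by
      funext i
      simp [hgdef, mul_assoc]
    rw [hfun]
  -- norm identities
  have hnormAA : ‖A * Aᴴ‖ = ‖A‖ * ‖A‖ := by
    have h := Matrix.l2_opNorm_conjTranspose_mul_self Aᴴ
    rw [Matrix.conjTranspose_conjTranspose, Matrix.l2_opNorm_conjTranspose] at h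
    exact h
  have hnormdiag : ‖A * Aᴴ‖ = ‖Matrix.diagonal g‖ := by
    have hU' : U ∈ unitary (Matrix (Fin n) (Fin n) ℝ) := Unitary.mem_iff.mpr ⟨hU2, hU1⟩
    have h2 : ∀ M : Matrix (Fin n) (Fin n) ℝ, ‖U * M‖ = ‖M‖ := fun M =>
      CStarRing.norm_coe_unitary_mul (⟨U, hU'⟩ : unitary (Matrix (Fin n) (Fin n) ℝ)) M
    have h3 : ∀ M : Matrix (Fin n) (Fin n) ℝ, ‖M * star U‖ = ‖M‖ := fun M =>
      CStarRing.norm_mul_coe_unitary M (star (⟨U, hU'⟩ : unitary (Matrix (Fin n) (Fin n) ℝ)))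
    rw [hAA, h2, h3]
  -- the function f and the sup
  set f : ℝ → ℝ := fun t => (1 + β) * Real.sqrt t / (1 + β * t) with hfdef
  have hf0 : ∀ i, 0 ≤ f (μ i) := fun i =>
    div_nonneg (mul_nonneg (by linarith) (Real.sqrt_nonneg _)) (hd0 i).le
  have hne : (Finset.univ : Finset (Fin n)).Nonempty := ⟨⟨0, hn⟩, Finset.mem_univ _⟩
  set Mx : ℝ := Finset.univ.sup' hne (fun i => f (μ i)) with hMxdef
  obtain ⟨i₀, -, hi₀⟩ := Finset.exists_mem_eq_sup' hne (fun i => f (μ i))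
  have hMx0 : 0 ≤ Mx := by rw [hMxdef, hi₀]; exact hf0 i₀
  have hgf : ∀ i, g i = f (μ i) * f (μ i) := by
    intro i
    have hs : Real.sqrt (μ i) * Real.sqrt (μ i) = μ i := Real.mul_self_sqrt (hμ0 i)
    have hne' : (1 + β * μ i) ≠ 0 := (hd0 i).ne'
    rw [hgdef, hfdef]
    field_simp
    nlinarith [hs]
  have hg0 : ∀ i, 0 ≤ g i := fun i => (hgf i) ▸ mul_nonneg (hf0 i) (hf0 i)
  have hsup : ‖Matrix.diagonal g‖ = Mx * Mx := by
    rw [aux_l2_diag hn g]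
    have h1 : Finset.univ.sup' ⟨⟨0, hn⟩, Finset.mem_univ _⟩ (fun i => |g i|)
        = Finset.univ.sup' hne (fun i => f (μ i) * f (μ i)) :=
      Finset.sup'_congr _ rfl (fun i _ => by rw [abs_of_nonneg (hg0 i), hgf i])
    rw [h1]
    apply le_antisymm
    · apply Finset.sup'_le
      intro i _
      have h2 : f (μ i) ≤ Mx := Finset.le_sup' (f := fun i => f (μ i)) (Finset.mem_univ i)
      exact mul_le_mul h2 h2 (hf0 i) hMx0
    · calc Mx * Mx = f (μ i₀) * f (μ i₀) := by rw [hMxdef, hi₀]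
        _ ≤ _ := Finset.le_sup' (f := fun i => f (μ i) * f (μ i)) (Finset.mem_univ i₀)
  -- conclude
  have hRHS : Finset.univ.sup' ⟨⟨0, hn⟩, Finset.mem_univ _⟩
      (fun i : Fin n => (1 + β) * Real.sqrt (lam i) / (1 + β * lam i)) = Mx := by
    rw [hMxdef]
    exact aux_sup'_congr hn lam μ (fun t => (1 + β) * Real.sqrt t / (1 + β * t)) hms
  rw [hRHS]
  have hLHS : ‖LinearMap.toContinuousLinearMap (Matrix.toEuclideanLin A)‖ = ‖A‖ := rfl
  rw [hLHS]
  have hchain : ‖A‖ * ‖A‖ = Mx * Mx := by rw [← hnormAA, hnormdiag, hsup]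
  exact (mul_self_inj (norm_nonneg A) hMx0).mp hchain
end
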